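/- arXiv:1507.02497 — 13 statements merged into one kernel-verified Lean document; each statement's English description precedes it below -/
import Mathlib

section
/- Let 𝒜 and ℬ be Grothendieck abelian categories, let π : 𝒜 → 𝒜/𝒮 and π' : ℬ → ℬ/𝒯 be Gabriel localizations with fully faithful right adjoints ω and ω' respectively, and let η : id_𝒜 → ω∘π be the unit of the adjunction π ⊣ ω. Assume 𝒜 has enough projectives. Let F : 𝒜 → ℬ be an additive right exact functor (it preserves finite colimits) such that π'(F(s)) ≅ 0 for every object s of 𝒜 with π(s) ≅ 0, and such that the first left derived functor L₁(π'∘F) satisfies L₁(π'∘F)(s) ≅ 0 for every object s with π(s) ≅ 0. Then for every object a of 𝒜 the morphism (π'∘F)(η_a) : π'(F(a)) → π'(F(ω(π(a)))) is an isomorphism. -/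
open CategoryTheory CategoryTheory.Limits

universe v u

open CategoryTheory.Projective CategoryTheory.Category

namespace Stmt0Aux

variable {C : Type u} [Category.{v} C] [Abelian C] [EnoughProjectives C]

noncomputable def resComplex {P X : C} [Projective P] (r : P ⟶ X) : ChainComplex C ℕ :=
  ChainComplex.mk' P (syzygies r) (d r) (fun f => ⟨_, d f, by erw [assoc, kernel.condition, comp_zero]⟩)

lemma resComplex_d_1_0 {P X : C} [Projective P] (r : P ⟶ X) :
    (resComplex r).d 1 0 = d r := by
  simp [resComplex]

lemma resComplex_exactAt_succ {P X : C} [Projective P] (r : P ⟶ X) (n : ℕ) :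
    (resComplex r).ExactAt (n + 1) := by
  rw [HomologicalComplex.exactAt_iff' _ (n + 1 + 1) (n + 1) n (by simp) (by simp)]
  let g := (resComplex r).d (n + 1) n
  let e := ChainComplex.mk'XIso P (syzygies r) (d r)
    (fun f => ⟨_, d f, by erw [assoc, kernel.condition, comp_zero]⟩) n
  have key : (resComplex r).d (n + 1 + 1) (n + 1) = e.hom ≫ d g := ChainComplex.mk'_d _ _ _ _ n
  let α : ShortComplex.mk (d g) g (by erw [assoc, kernel.condition, comp_zero]) ⟶
      (resComplex r).sc' (n + 1 + 1) (n + 1) n :=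
    { τ₁ := e.inv
      τ₂ := 𝟙 _
      τ₃ := 𝟙 _
      comm₁₂ := (congrArg (fun x => e.inv ≫ x) key).trans
        ((Iso.inv_hom_id_assoc _ _).trans (comp_id _).symm)
      comm₂₃ := (id_comp _).trans (comp_id _).symm }
  haveI : Epi α.τ₁ := (inferInstance : Epi e.inv)
  haveI : IsIso α.τ₂ := (inferInstance : IsIso (𝟙 _))
  haveI : Mono α.τ₃ := (inferInstance : Mono (𝟙 _))
  rw [← ShortComplex.exact_iff_of_epi_of_isIso_of_mono α]
  exact exact_d_f g

instance resComplex_projective {P X : C} [Projective P] (r : P ⟶ X) (n : ℕ) :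
    Projective ((resComplex r).X n) := by
  obtain (_ | _ | _ | n) := n
  · exact (inferInstance : Projective P)
  · exact (inferInstance : Projective (syzygies r))
  · apply Projective.projective_over
  · apply Projective.projective_over

/-- A projective resolution of `X` starting with a chosen epimorphism `r : P ⟶ X`. -/
noncomputable def resolution {P X : C} [Projective P] (r : P ⟶ X) [Epi r] :
    ProjectiveResolution X where
  complex := resComplex r
  π := (ChainComplex.toSingle₀Equiv _ _).symm ⟨r, by
          rw [resComplex_d_1_0]; erw [assoc, kernel.condition, comp_zero]⟩
  quasiIso := ⟨fun n => by
    cases n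
    · rw [ChainComplex.quasiIsoAt₀_iff, ShortComplex.quasiIso_iff_of_zeros']
      · refine (ShortComplex.exact_and_epi_g_iff_of_iso ?_).2
          ⟨exact_d_f r, by infer_instance⟩
        exact ShortComplex.isoMk (Iso.refl _) (Iso.refl _) (Iso.refl _)
          (by exact (id_comp _).trans ((resComplex_d_1_0 r).symm.trans (comp_id _).symm))
          (by exact (id_comp _).trans ((ChainComplex.toSingle₀Equiv_symm_apply_f_zero (C := resComplex r) r _).symm.trans (comp_id _).symm))
      all_goals rfl
    · rw [quasiIsoAt_iff_exactAt']
      · apply resComplex_exactAt_succ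
      · apply ChainComplex.exactAt_succ_single_obj⟩

end Stmt0Aux

attribute [local instance] CategoryTheory.Abelian.Pseudoelement.objectToSort
  CategoryTheory.Abelian.Pseudoelement.homToFun

open CategoryTheory.Abelian.Pseudoelement Stmt0Aux

attribute [local instance] CategoryTheory.Abelian.Pseudoelement.objectToSort
  CategoryTheory.Abelian.Pseudoelement.homToFun

open CategoryTheory.Abelian.Pseudoelement Stmt0Aux

/-- If `F : 𝒜 ⥤ ℬ` is additive right exact, `π' ∘ F` and its first left
derived functor vanish on the kernel of the Gabriel localization `π`, then for every object
`a`, `(π' ∘ F)(η_a) : π'(F a) ⟶ π'(F(ω(π a)))` is an isomorphism, where `η` is the unit of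
`π ⊣ ω`. -/
theorem stmt0
    -- 𝒜 is a Grothendieck abelian category with enough projectives
    (A : Type u) [Category.{v} A] [Abelian A] [HasColimits A] [AB5 A] [HasSeparator A]
    [EnoughProjectives A]
    -- 𝒜/𝒮 is a Grothendieck abelian category
    (QA : Type u) [Category.{v} QA] [Abelian QA] [HasColimits QA] [AB5 QA] [HasSeparator QA]
    -- ℬ is a Grothendieck abelian category
    (B : Type u) [Category.{v} B] [Abelian B] [HasColimits B] [AB5 B] [HasSeparator B]
    -- ℬ/𝒯 is a Grothendieck abelian category
    (QB : Type u) [Category.{v} QB] [Abelian QB] [HasColimits QB] [AB5 QB] [HasSeparator QB]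
    -- π : 𝒜 ⥤ 𝒜/𝒮 is a Gabriel localization: exact with fully faithful right adjoint ω
    (π : A ⥤ QA) [π.Additive] [PreservesFiniteLimits π] [PreservesFiniteColimits π]
    (ω : QA ⥤ A) [ω.Full] [ω.Faithful] (adj : π ⊣ ω)
    -- π' : ℬ ⥤ ℬ/𝒯 is a Gabriel localization: exact with fully faithful right adjoint ω'
    (π' : B ⥤ QB) [π'.Additive] [PreservesFiniteLimits π'] [PreservesFiniteColimits π']
    (ω' : QB ⥤ B) [ω'.Full] [ω'.Faithful] (adj' : π' ⊣ ω')
    -- F is additive and right exact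
    (F : A ⥤ B) [F.Additive] [PreservesFiniteColimits F]
    -- π' ∘ F vanishes on the kernel of π
    (hker : ∀ s : A, IsZero (π.obj s) → IsZero (π'.obj (F.obj s)))
    -- L₁(π' ∘ F) vanishes on the kernel of π
    (hL1 : ∀ s : A, IsZero (π.obj s) → IsZero (((F ⋙ π').leftDerived 1).obj s)) :
    ∀ a : A, IsIso (π'.map (F.map (adj.unit.app a))) := by
  intro a
  set G : A ⥤ QB := F ⋙ π' with hGdef
  haveI : PreservesFiniteColimits G := comp_preservesFiniteColimits F π'
  set η : a ⟶ ω.obj (π.obj a) := adj.unit.app a with hηdef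
  -- `π.map η` is an isomorphism
  haveI hπη : IsIso (π.map η) := by
    have h1 : π.map η ≫ adj.counit.app (π.obj a) = 𝟙 _ := adj.left_triangle_components a
    haveI : IsIso (π.map η ≫ adj.counit.app (π.obj a)) := by rw [h1]; infer_instance
    exact IsIso.of_isIso_comp_right (π.map η) (adj.counit.app (π.obj a))
  -- kernel and cokernel of `η` are killed by `π`
  have hKzero : IsZero (π.obj (kernel η)) := by
    have h2 : IsZero (kernel (π.map η)) := by
      refine IsZero.of_mono_eq_zero (kernel.ι (π.map η)) ?_
      rw [← cancel_mono (π.map η), kernel.condition, zero_comp]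
    exact h2.of_iso (PreservesKernel.iso π η)
  have hCzero : IsZero (π.obj (cokernel η)) := by
    have h2 : IsZero (cokernel (π.map η)) := by
      refine IsZero.of_epi_eq_zero (cokernel.π (π.map η)) ?_
      rw [← cancel_epi (π.map η), cokernel.condition, comp_zero]
    exact h2.of_iso (PreservesCokernel.iso π η)
  have hGK : IsZero (G.obj (kernel η)) := hker _ hKzero
  have hGC : IsZero (G.obj (cokernel η)) := hker _ hCzero
  have hL1C : IsZero ((G.leftDerived 1).obj (cokernel η)) := hL1 _ hCzero
  -- image factorization of η
  set c : ω.obj (π.obj a) ⟶ cokernel η := cokernel.π η with hcdef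
  set i : kernel c ⟶ ω.obj (π.obj a) := kernel.ι c with hidef
  set p : a ⟶ kernel c := kernel.lift c η (cokernel.condition η) with hpdef
  have hpi : p ≫ i = η := kernel.lift_ι _ _ _
  haveI hp_epi : Epi p := (inferInstance : Epi (Abelian.factorThruImage η))
  -- G.map p is an isomorphism
  haveI hGp : IsIso (G.map p) := by
    have hzero : kernel.ι η ≫ p = 0 := by
      rw [← cancel_mono i, assoc, hpi, kernel.condition, zero_comp]
    have hS1 : (ShortComplex.mk (kernel.ι η) p hzero).Exact := by
      apply ShortComplex.exact_of_f_is_kernel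
      exact KernelFork.IsLimit.ofι _ _
        (fun k hk => kernel.lift η k (by rw [← hpi, ← assoc, hk, zero_comp]))
        (fun k hk => kernel.lift_ι _ _ _)
        (fun k hk l hl => by rw [← cancel_mono (kernel.ι η), hl, kernel.lift_ι])
    have hS1m : ((ShortComplex.mk (kernel.ι η) p hzero).map G).Exact :=
      hS1.map_of_epi_of_preservesCokernel G hp_epi inferInstance
    haveI : Mono (G.map p) := hS1m.mono_g (hGK.eq_of_src _ _)
    haveI : Epi (G.map p) := inferInstance
    exact isIso_of_mono_of_epi _
  -- G.map i is epi
  haveI hGi_epi : Epi (G.map i) := by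
    have hS3 : (ShortComplex.mk i c (kernel.condition c)).Exact :=
      ShortComplex.exact_of_f_is_kernel _ (kernelIsKernel c)
    haveI : Epi c := (inferInstance : Epi (cokernel.π η))
    have hS3m : ((ShortComplex.mk i c (kernel.condition c)).map G).Exact :=
      hS3.map_of_epi_of_preservesCokernel G (by infer_instance) inferInstance
    exact hS3m.epi_f (hGC.eq_of_tgt _ _)
  -- G.map i is mono
  haveI hGi_mono : Mono (G.map i) := by
    -- chosen projective presentation of `ω.obj (π.obj a)`
    set q : Projective.over (ω.obj (π.obj a)) ⟶ ω.obj (π.obj a) :=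
      Projective.π (ω.obj (π.obj a)) with hqdef
    set r : Projective.over (ω.obj (π.obj a)) ⟶ cokernel η := q ≫ c with hrdef
    haveI : Epi q := (inferInstance : Epi (Projective.π _))
    haveI : Epi r := by rw [hrdef]; exact epi_comp _ _
    set R : ProjectiveResolution (cokernel η) := resolution r with hRdef
    set GC := (G.mapHomologicalComplex (ComplexShape.down ℕ)).obj R.complex with hGCdef
    -- exactness of the mapped complex in degree 1, from `hL1C`
    have hH1 : IsZero (GC.homology 1) :=
      hL1C.of_iso (R.isoLeftDerivedObj G 1).symm
    have hEx1 : (GC.sc' 2 1 0).Exact := by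
      rw [← HomologicalComplex.exactAt_iff' GC 2 1 0 (by simp) (by simp)]
      exact (HomologicalComplex.exactAt_iff_isZero_homology _ _).2 hH1
    -- morphisms
    set ι1 : kernel r ⟶ Projective.over (ω.obj (π.obj a)) := kernel.ι r with hι1def
    have hι1r : ι1 ≫ r = 0 := kernel.condition r
    set u : kernel r ⟶ kernel c := kernel.lift c (ι1 ≫ q)
      (by rw [assoc, ← hrdef]; exact hι1r) with hudef
    have hu : u ≫ i = ι1 ≫ q := kernel.lift_ι _ _ _
    have hic : i ≫ c = 0 := kernel.condition c
    -- `u` is epi (pseudoelement chase in `A`)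
    haveI hu_epi : Epi u := by
      apply epi_of_pseudo_surjective
      intro x
      obtain ⟨p0, hp0⟩ := pseudo_surjective_of_epi q (i x)
      have h1 : r p0 = 0 := by
        rw [hrdef, Abelian.Pseudoelement.comp_apply, hp0, ← Abelian.Pseudoelement.comp_apply, hic]
        exact zero_apply _ _
      have hexr : (ShortComplex.mk ι1 r hι1r).Exact :=
        ShortComplex.exact_of_f_is_kernel _ (kernelIsKernel r)
      obtain ⟨k, hk⟩ := pseudo_exact_of_exact hexr p0 h1
      have hk' : ι1 k = p0 := hk
      refine ⟨k, pseudo_injective_of_mono i ?_⟩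
      rw [← Abelian.Pseudoelement.comp_apply, hu, Abelian.Pseudoelement.comp_apply, hk', hp0]
    -- `G.map ι1` is mono, since `L₁G` vanishes on `cokernel η`
    have hd10 : R.complex.d 1 0 = Projective.π (kernel r) ≫ ι1 := resComplex_d_1_0 r
    set e1 : R.complex.X 1 ⟶ kernel r := Projective.π (kernel r) with he1def
    haveI : Epi e1 := (inferInstance : Epi (Projective.π _))
    haveI hGι1_mono : Mono (G.map ι1) := by
      apply mono_of_zero_of_map_zero
      intro t ht
      obtain ⟨s, hs⟩ := pseudo_surjective_of_epi (G.map e1) t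
      have hgf : (GC.sc' 2 1 0).g = G.map e1 ≫ G.map ι1 := by
        show G.map (R.complex.d 1 0) = _
        erw [hd10, G.map_comp, he1def]
        rfl
      have h2 : (GC.sc' 2 1 0).g s = 0 := by
        erw [hgf, Abelian.Pseudoelement.comp_apply, hs, ht]
        rfl
      obtain ⟨s', hs'⟩ := pseudo_exact_of_exact hEx1 s h2
      have hd21e : R.complex.d 2 1 ≫ e1 = 0 := by
        erw [← cancel_mono ι1, assoc, ← hd10, HomologicalComplex.d_comp_d, zero_comp]
        rfl
      have hs'' : (G.map (R.complex.d 2 1)) s' = s := hs'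
      erw [← hs, ← hs'', ← Abelian.Pseudoelement.comp_apply, ← G.map_comp, hd21e, G.map_zero]
      exact zero_apply _ _
    -- final chase: `G.map i` is mono
    set ι2 : kernel q ⟶ Projective.over (ω.obj (π.obj a)) := kernel.ι q with hι2def
    have hι2q : ι2 ≫ q = 0 := kernel.condition q
    have hS2 : (ShortComplex.mk ι2 q hι2q).Exact :=
      ShortComplex.exact_of_f_is_kernel _ (kernelIsKernel q)
    have hS2m : ((ShortComplex.mk ι2 q hι2q).map G).Exact :=
      hS2.map_of_epi_of_preservesCokernel G (by infer_instance) inferInstance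
    set w : kernel q ⟶ kernel r := kernel.lift r ι2
      (by rw [hrdef, ← assoc, hι2q, zero_comp]) with hwdef
    have hw : w ≫ ι1 = ι2 := kernel.lift_ι _ _ _
    apply mono_of_zero_of_map_zero
    intro x hx
    haveI : Epi (G.map u) := inferInstance
    obtain ⟨y, hy⟩ := pseudo_surjective_of_epi (G.map u) x
    have h3 : (G.map q) ((G.map ι1) y) = 0 := by
      rw [← Abelian.Pseudoelement.comp_apply, ← G.map_comp, ← hu, G.map_comp, Abelian.Pseudoelement.comp_apply, hy]
      exact hx
    obtain ⟨z, hz⟩ := pseudo_exact_of_exact hS2m ((G.map ι1) y) h3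
    have hz' : (G.map ι2) z = (G.map ι1) y := hz
    have h4 : (G.map ι1) ((G.map w) z) = (G.map ι1) y := by
      erw [← Abelian.Pseudoelement.comp_apply, ← G.map_comp, hw]
      exact hz'
    have h5 : (G.map w) z = y := pseudo_injective_of_mono (G.map ι1) h4
    have h6 : w ≫ u = 0 := by
      rw [← cancel_mono i, assoc, hu, ← assoc, hw, hι2q, zero_comp]
    erw [← hy, ← h5, ← Abelian.Pseudoelement.comp_apply, ← G.map_comp, h6, G.map_zero]
    exact zero_apply _ _
  haveI : IsIso (G.map i) := isIso_of_mono_of_epi _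
  have : π'.map (F.map η) = G.map p ≫ G.map i := by
    rw [← G.map_comp, hpi]; rfl
  rw [this]
  infer_instance
end

section
/- Let 𝒜 and ℬ be Grothendieck abelian categories, let π : 𝒜 → 𝒜/𝒮 and π' : ℬ → ℬ/𝒯 be Gabriel localizations with fully faithful right adjoints ω and ω'. Assume 𝒜 has enough projectives. Let F : 𝒜 → ℬ be an additive right exact functor such that π'(F(s)) ≅ 0 for every object s with π(s) ≅ 0, and such that L₁(π'∘F)(s) ≅ 0 for every object s with π(s) ≅ 0. Then the functor G := π'∘F∘ω : 𝒜/𝒮 → ℬ/𝒯 satisfies G∘π ≅ π'∘F (natural isomorphism of functors 𝒜 → ℬ/𝒯), and moreover any functor G' : 𝒜/𝒮 → ℬ/𝒯 with G'∘π ≅ π'∘F is naturally isomorphic to G. -/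
open CategoryTheory CategoryTheory.Limits

universe v u

section Aux

variable {𝒜 : Type*} [Category 𝒜] [Abelian 𝒜]
variable {𝒟 : Type*} [Category 𝒟] [Abelian 𝒟]

/-- A commutative square built from a mono `i`, an epi `π₀ : P₀ ⟶ cokernel i`,
a lift `g` of `π₀` through `cokernel.π i`, and the induced map on kernels, is a pushout. -/
lemma aux_isPushout {I Y P₀ : 𝒜} (i : I ⟶ Y) [Mono i] (π₀ : P₀ ⟶ cokernel i) [Epi π₀]
    (g : P₀ ⟶ Y) (hg : g ≫ cokernel.π i = π₀)
    (h : kernel π₀ ⟶ I) (hh : h ≫ i = kernel.ι π₀ ≫ g) :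
    IsPushout h (kernel.ι π₀) i g := by
  set z : kernel π₀ ⟶ P₀ := kernel.ι π₀ with hzdef
  have hzπ : z ≫ π₀ = 0 := kernel.condition π₀
  set k : kernel π₀ ⟶ I ⊞ P₀ := biprod.lift h (-z) with hkdef
  set e : I ⊞ P₀ ⟶ Y := biprod.desc i g with hedef
  have hke : k ≫ e = 0 := by
    rw [hkdef, hedef, biprod.lift_desc, hh, Preadditive.neg_comp, add_neg_cancel]
  -- `e` is an epimorphism
  have hepi : Epi e := by
    apply Preadditive.epi_of_cancel_zero
    intro R t ht
    have h1 : i ≫ t = 0 := by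
      have := biprod.inl ≫= ht
      simpa [hedef] using this
    have h2 : g ≫ t = 0 := by
      have := biprod.inr ≫= ht
      simpa [hedef] using this
    have h3 : π₀ ≫ cokernel.desc i t h1 = 0 := by
      rw [← hg, Category.assoc, cokernel.π_desc]; exact h2
    have h4 : cokernel.desc i t h1 = 0 := zero_of_epi_comp π₀ h3
    rw [← cokernel.π_desc i t h1, h4, comp_zero]
  -- key decomposition for morphisms into the biproduct
  have key : ∀ {T : 𝒜} (t : T ⟶ I ⊞ P₀), t ≫ e = 0 →
      (t ≫ biprod.fst) ≫ i + (t ≫ biprod.snd) ≫ g = 0 := by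
    intro T t ht
    have : t ≫ e = (t ≫ biprod.fst) ≫ i + (t ≫ biprod.snd) ≫ g := by
      rw [hedef, biprod.desc_eq, Preadditive.comp_add, Category.assoc, Category.assoc]
    rw [← this, ht]
  have key2 : ∀ {T : 𝒜} (t : T ⟶ I ⊞ P₀), t ≫ e = 0 → (t ≫ biprod.snd) ≫ π₀ = 0 := by
    intro T t ht
    have h5 := key t ht
    have h6 : (t ≫ biprod.snd) ≫ g = -((t ≫ biprod.fst) ≫ i) := by
      rw [eq_neg_iff_add_eq_zero, add_comm]; exact h5
    rw [← hg, ← Category.assoc, h6]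
    simp
  -- `k` is the kernel of `e`
  have hlim : IsLimit (KernelFork.ofι k hke) := by
    refine KernelFork.IsLimit.ofι k hke
      (fun {T} t ht => -(kernel.lift π₀ (t ≫ biprod.snd) (key2 t ht))) ?_ ?_
    · intro T t ht
      beta_reduce
      set kl := kernel.lift π₀ (t ≫ biprod.snd) (key2 t ht) with hkl
      have hklz : kl ≫ z = t ≫ biprod.snd := kernel.lift_ι _ _ _
      have h6 : (t ≫ biprod.snd) ≫ g = -((t ≫ biprod.fst) ≫ i) := by
        rw [eq_neg_iff_add_eq_zero, add_comm]; exact key t ht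
      apply biprod.hom_ext
      · rw [Category.assoc, hkdef, biprod.lift_fst, ← cancel_mono i, Preadditive.neg_comp,
          Preadditive.neg_comp, Category.assoc, hh, ← Category.assoc, hklz, h6, neg_neg]
      · rw [Category.assoc, hkdef, biprod.lift_snd, Preadditive.neg_comp, Preadditive.comp_neg,
          neg_neg, hklz]
    · intro T t ht m hm
      beta_reduce
      set kl := kernel.lift π₀ (t ≫ biprod.snd) (key2 t ht) with hkl
      have hklz : kl ≫ z = t ≫ biprod.snd := kernel.lift_ι _ _ _
      have h7 : -(m ≫ z) = t ≫ biprod.snd := by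
        have := hm =≫ biprod.snd
        rw [Category.assoc, hkdef, biprod.lift_snd, Preadditive.comp_neg] at this
        exact this
      rw [← cancel_mono z, Preadditive.neg_comp, hklz, ← h7, neg_neg]
  -- conclude
  have hS : (ShortComplex.mk k e hke).Exact :=
    ShortComplex.exact_of_f_is_kernel _ hlim
  haveI : Epi (ShortComplex.mk k e hke).g := hepi
  have hco : IsColimit (CokernelCofork.ofπ (ShortComplex.mk k e hke).g
      (ShortComplex.mk k e hke).zero) := hS.gIsCokernel
  have sq : CommSq h z i g := ⟨hh⟩
  exact IsPushout.of_isColimit ((sq.isColimitEquivIsColimitCokernelCofork).symm hco)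

/-- If `L₁ G` vanishes on `CC`, then `G` maps the inclusion of the first syzygy of a
projective resolution of `CC` to a monomorphism. -/
lemma aux_mono [EnoughProjectives 𝒜] (G : 𝒜 ⥤ 𝒟) [G.Additive] [PreservesFiniteColimits G]
    {CC : 𝒜} (hL : IsZero ((G.leftDerived 1).obj CC)) (P : ProjectiveResolution CC)
    {Z : 𝒜} (z : Z ⟶ P.complex.X 0) [Mono z] (e : P.complex.X 1 ⟶ Z) [Epi e]
    (he : e ≫ z = P.complex.d 1 0) : Mono (G.map z) := by
  have hd2 : P.complex.d 2 1 ≫ e = 0 := by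
    rw [← cancel_mono z, Category.assoc, he, HomologicalComplex.d_comp_d, zero_comp]
  set K := (G.mapHomologicalComplex (ComplexShape.down ℕ)).obj P.complex with hK
  have hzero : IsZero ((HomologicalComplex.homologyFunctor 𝒟 (ComplexShape.down ℕ) 1).obj K) :=
    hL.of_iso (P.isoLeftDerivedObj G 1).symm
  have hex : K.ExactAt 1 := (K.exactAt_iff_isZero_homology 1).2 hzero
  rw [K.exactAt_iff' 2 1 0 (by simp) (by simp)] at hex
  haveI : Epi (G.map e) := G.map_epi e
  apply Preadditive.mono_of_cancel_zero
  intro T t ht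
  obtain ⟨T₁, ρ₁, hρ₁, x, hx⟩ := surjective_up_to_refinements_of_epi (G.map e) t
  have hx0 : x ≫ (K.sc' 2 1 0).g = 0 := by
    show x ≫ G.map (P.complex.d 1 0) = 0
    rw [← he, G.map_comp, ← Category.assoc, ← hx, Category.assoc, ht, comp_zero]
  obtain ⟨T₂, ρ₂, hρ₂, w, hw⟩ := hex.exact_up_to_refinements x hx0
  have hw' : ρ₂ ≫ x = w ≫ G.map (P.complex.d 2 1) := hw
  have hzero2 : (ρ₂ ≫ ρ₁) ≫ t = 0 := by
    have h3 : G.map (P.complex.d 2 1) ≫ G.map e = 0 := by rw [← G.map_comp, hd2, G.map_zero]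
    rw [Category.assoc, hx, ← Category.assoc, hw']
    exact (Category.assoc w _ _).trans ((w ≫= h3).trans comp_zero)
  exact zero_of_epi_comp (ρ₂ ≫ ρ₁) hzero2

/-- A right exact functor maps an epimorphism whose kernel it kills to an isomorphism. -/
lemma aux_epi_iso (G : 𝒜 ⥤ 𝒟) [G.Additive] [PreservesFiniteColimits G]
    {X Y : 𝒜} (p : X ⟶ Y) [Epi p] (hk : IsZero (G.obj (kernel p))) : IsIso (G.map p) := by
  have hS : (ShortComplex.mk (kernel.ι p) p (kernel.condition p)).Exact :=
    ShortComplex.exact_of_f_is_kernel _ (kernelIsKernel p)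
  have hSm : ((ShortComplex.mk (kernel.ι p) p (kernel.condition p)).map G).Exact :=
    hS.map_of_epi_of_preservesCokernel G inferInstance inferInstance
  haveI : Epi (G.map p) := G.map_epi p
  have hmono : Mono (G.map p) := by
    apply Preadditive.mono_of_cancel_zero
    intro T t ht
    obtain ⟨T', ρ, hρ, w, hw⟩ := hSm.exact_up_to_refinements t ht
    have hρt : ρ ≫ t = 0 := by
      refine hw.trans ?_
      show w ≫ G.map (kernel.ι p) = 0
      exact (congrArg (fun q => w ≫ q) (hk.eq_of_src (G.map (kernel.ι p)) 0)).trans comp_zero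
    exact zero_of_epi_comp ρ hρt
  exact isIso_of_mono_of_epi _

/-- A right exact functor maps a monomorphism to an isomorphism provided it kills the
cokernel and the first left derived functor also kills the cokernel. -/
lemma aux_mono_iso [EnoughProjectives 𝒜] (G : 𝒜 ⥤ 𝒟) [G.Additive] [PreservesFiniteColimits G]
    {I Y : 𝒜} (m : I ⟶ Y) [Mono m] (h0 : IsZero (G.obj (cokernel m)))
    (hL : IsZero ((G.leftDerived 1).obj (cokernel m))) : IsIso (G.map m) := by
  -- a projective resolution of the cokernel
  let P : ProjectiveResolution (cokernel m) := HasProjectiveResolution.out.some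
  let π₀ : P.complex.X 0 ⟶ cokernel m := P.π.f 0
  haveI : Epi π₀ := inferInstanceAs (Epi (P.π.f 0))
  -- lift through the epi `cokernel.π m`
  let g : P.complex.X 0 ⟶ Y := Projective.factorThru π₀ (cokernel.π m)
  have hg : g ≫ cokernel.π m = π₀ := Projective.factorThru_comp _ _
  have hzg : (kernel.ι π₀ ≫ g) ≫ cokernel.π m = 0 := by
    rw [Category.assoc, hg, kernel.condition]
  let h : kernel π₀ ⟶ I := Abelian.monoLift m (kernel.ι π₀ ≫ g) hzg
  have hh : h ≫ m = kernel.ι π₀ ≫ g := Abelian.monoLift_comp m _ hzg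
  -- the pushout square, and its image under `G`
  have hpo : IsPushout h (kernel.ι π₀) m g := aux_isPushout m π₀ g hg h hh
  have hpoG : IsPushout (G.map h) (G.map (kernel.ι π₀)) (G.map m) (G.map g) := hpo.map G
  -- `G` maps the syzygy inclusion to a mono
  have hd : P.complex.d 1 0 ≫ π₀ = 0 := P.complex_d_comp_π_f_zero
  let e : P.complex.X 1 ⟶ kernel π₀ := kernel.lift π₀ (P.complex.d 1 0) hd
  haveI : Epi e := by
    have := (ShortComplex.exact_iff_epi_kernel_lift _).1 P.exact₀
    exact this
  have he : e ≫ kernel.ι π₀ = P.complex.d 1 0 := kernel.lift_ι _ _ _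
  haveI : Mono (G.map (kernel.ι π₀)) := aux_mono G hL P (kernel.ι π₀) e he
  -- mono part
  haveI : Mono (G.map m) :=
    Abelian.mono_inl_of_isColimit (G.map h) (G.map (kernel.ι π₀)) hpoG.isColimit
  -- epi part
  have hS : (ShortComplex.mk m (cokernel.π m) (cokernel.condition m)).Exact :=
    ShortComplex.exact_of_g_is_cokernel _ (cokernelIsCokernel m)
  have hSm : ((ShortComplex.mk m (cokernel.π m) (cokernel.condition m)).map G).Exact :=
    hS.map_of_epi_of_preservesCokernel G inferInstance inferInstance
  haveI : Epi (G.map m) := by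
    have := hSm.epi_f (by

      show G.map (cokernel.π m) = 0
      exact h0.eq_of_tgt _ _)
    exact this
  exact isIso_of_mono_of_epi _

end Aux

/-- Under the hypotheses of the lemma, `G := π' ∘ F ∘ ω` satisfies
`G ∘ π ≅ π' ∘ F`, and any `G'` with `G' ∘ π ≅ π' ∘ F` is naturally isomorphic to `G`. -/
theorem stmt1
    -- 𝒜 is a Grothendieck abelian category with enough projectives
    (A : Type u) [Category.{v} A] [Abelian A] [HasColimits A] [AB5 A] [HasSeparator A]
    [EnoughProjectives A]
    -- 𝒜/𝒮 is a Grothendieck abelian category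
    (QA : Type u) [Category.{v} QA] [Abelian QA] [HasColimits QA] [AB5 QA] [HasSeparator QA]
    -- ℬ is a Grothendieck abelian category
    (B : Type u) [Category.{v} B] [Abelian B] [HasColimits B] [AB5 B] [HasSeparator B]
    -- ℬ/𝒯 is a Grothendieck abelian category
    (QB : Type u) [Category.{v} QB] [Abelian QB] [HasColimits QB] [AB5 QB] [HasSeparator QB]
    -- π : 𝒜 ⥤ 𝒜/𝒮 is a Gabriel localization: exact with fully faithful right adjoint ω
    (π : A ⥤ QA) [π.Additive] [PreservesFiniteLimits π] [PreservesFiniteColimits π]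
    (ω : QA ⥤ A) [ω.Full] [ω.Faithful] (adj : π ⊣ ω)
    -- π' : ℬ ⥤ ℬ/𝒯 is a Gabriel localization: exact with fully faithful right adjoint ω'
    (π' : B ⥤ QB) [π'.Additive] [PreservesFiniteLimits π'] [PreservesFiniteColimits π']
    (ω' : QB ⥤ B) [ω'.Full] [ω'.Faithful] (adj' : π' ⊣ ω')
    -- F is additive and right exact
    (F : A ⥤ B) [F.Additive] [PreservesFiniteColimits F]
    -- π' ∘ F vanishes on the kernel of π
    (hker : ∀ s : A, IsZero (π.obj s) → IsZero (π'.obj (F.obj s)))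
    -- L₁(π' ∘ F) vanishes on the kernel of π
    (hL1 : ∀ s : A, IsZero (π.obj s) → IsZero (((F ⋙ π').leftDerived 1).obj s))
    :
    Nonempty (π ⋙ (ω ⋙ F ⋙ π') ≅ F ⋙ π') ∧
      ∀ G' : QA ⥤ QB, Nonempty (π ⋙ G' ≅ F ⋙ π') →
        Nonempty (G' ≅ ω ⋙ F ⋙ π') := by
  haveI : PreservesFiniteColimits (F ⋙ π') := comp_preservesFiniteColimits F π'
  -- the key step: `F ⋙ π'` inverts every morphism inverted by `π`
  have key : ∀ {X Y : A} (f : X ⟶ Y), IsIso (π.map f) → IsIso ((F ⋙ π').map f) := by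
    intro X Y f hiso
    set G : A ⥤ QB := F ⋙ π' with hG
    set p : X ⟶ image f := factorThruImage f with hp
    set m : image f ⟶ Y := image.ι f with hm
    have hfac : p ≫ m = f := image.fac f
    have hπfac : π.map p ≫ π.map m = π.map f := by rw [← π.map_comp, hfac]
    haveI : Epi (π.map p) := π.map_epi p
    haveI : Mono (π.map m) := π.map_mono m
    haveI : Epi (π.map m) := by
      haveI : Epi (π.map p ≫ π.map m) := by rw [hπfac]; infer_instance
      exact epi_of_epi (π.map p) (π.map m)
    haveI : IsIso (π.map m) := isIso_of_mono_of_epi _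
    haveI : IsIso (π.map p) := by
      haveI : IsIso (π.map p ≫ π.map m) := by rw [hπfac]; infer_instance
      exact IsIso.of_isIso_comp_right (π.map p) (π.map m)
    -- kernel of `p` is killed by `π`
    have hkerp : IsZero (π.obj (kernel p)) := by
      refine IsZero.of_iso ?_ (PreservesKernel.iso π p)
      exact (isZero_zero QA).of_iso (kernel.ofMono (π.map p))
    -- cokernel of `m` is killed by `π`
    have hcokm : IsZero (π.obj (cokernel m)) := by
      refine IsZero.of_iso ?_ (PreservesCokernel.iso π m)
      exact (isZero_zero QA).of_iso (cokernel.ofEpi (π.map m))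
    haveI hip : IsIso (G.map p) := aux_epi_iso G p (hker _ hkerp)
    haveI him : IsIso (G.map m) := aux_mono_iso G m (hker _ hcokm) (hL1 _ hcokm)
    have : G.map p ≫ G.map m = G.map f := by rw [← G.map_comp, hfac]
    rw [← this]
    infer_instance
  -- the unit is inverted by `π`
  have hunit : ∀ X : A, IsIso (π.map (adj.unit.app X)) := by
    intro X
    haveI : IsIso (𝟙 (π.obj X)) := ⟨𝟙 (π.obj X), by simp, by simp⟩
    exact IsIso.of_isIso_fac_right (adj.left_triangle_components X)
  constructor
  · -- construct the natural isomorphism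
    let τ : F ⋙ π' ⟶ π ⋙ (ω ⋙ F ⋙ π') :=
      { app := fun X => (F ⋙ π').map (adj.unit.app X)
        naturality := fun X Y f => by
          have hnat := adj.unit.naturality f
          dsimp at hnat
          dsimp
          rw [← π'.map_comp, ← π'.map_comp, ← F.map_comp, ← F.map_comp, hnat] }
    haveI : ∀ X : A, IsIso (τ.app X) := fun X => key (adj.unit.app X) (hunit X)
    haveI : IsIso τ := NatIso.isIso_of_isIso_app τ
    exact ⟨(asIso τ).symm⟩
  · -- uniqueness
    intro G' ⟨E⟩
    refine ⟨?_⟩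
    calc G' ≅ 𝟭 QA ⋙ G' := (Functor.leftUnitor G').symm
      _ ≅ (ω ⋙ π) ⋙ G' := Functor.isoWhiskerRight (asIso adj.counit).symm G'
      _ ≅ ω ⋙ (π ⋙ G') := Functor.associator ω π G'
      _ ≅ ω ⋙ (F ⋙ π') := Functor.isoWhiskerLeft ω E
end

section
/- Let 𝒜 and ℬ be Grothendieck abelian categories, let π : 𝒜 → 𝒜/𝒮 and π' : ℬ → ℬ/𝒯 be Gabriel localizations with fully faithful right adjoints ω and ω'. Assume 𝒜 has enough projectives. Let F : 𝒜 → ℬ be an additive right exact functor such that π'(F(s)) ≅ 0 for every object s with π(s) ≅ 0, and such that L₁(π'∘F)(s) ≅ 0 for every object s with π(s) ≅ 0. Then the functor G := π'∘F∘ω : 𝒜/𝒮 → ℬ/𝒯 is right exact, i.e. it preserves finite colimits. -/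
open CategoryTheory CategoryTheory.Limits

universe w v u

section Stmt2Aux

variable {A : Type u} [Category.{v} A] [Abelian A]
variable {D : Type w} [Category.{v} D] [Abelian D]

/-- If `L₁H Q = 0`, then `H` preserves the mono `ker(P₀ → Q) → P₀` at the bottom of a
projective resolution of `Q`. -/
lemma stmt2_aux_mono [EnoughProjectives A] (H : A ⥤ D) [H.Additive] [PreservesFiniteColimits H]
    {Q : A} (P : ProjectiveResolution Q)
    (h1 : IsZero ((H.leftDerived 1).obj Q)) :
    Mono (H.map (kernel.ι (P.π.f 0))) := by
  haveI : H.PreservesEpimorphisms := inferInstance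
  set π₀ := P.π.f 0 with hπ₀
  set d₁ := P.complex.d 1 0 with hd₁
  have hf : Epi (kernel.lift π₀ d₁ P.complex_d_comp_π_f_zero) := by
    have := P.exact₀
    rw [ShortComplex.exact_iff_epi_kernel_lift] at this
    exact this
  set f := kernel.lift π₀ d₁ P.complex_d_comp_π_f_zero with hf'
  have hfι : f ≫ kernel.ι π₀ = d₁ := kernel.lift_ι _ _ _
  -- exactness of the mapped complex in degree 1
  have h2 : (((H.mapHomologicalComplex _).obj P.complex).sc' 2 1 0).Exact := by
    rw [← HomologicalComplex.exactAt_iff' _ 2 1 0 (by simp) (by simp),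
      HomologicalComplex.exactAt_iff_isZero_homology]
    exact h1.of_iso (P.isoLeftDerivedObj H 1).symm
  rw [Preadditive.mono_iff_cancel_zero]
  intro V x hx
  obtain ⟨V', π₂, hπ₂, x', hx'⟩ := surjective_up_to_refinements_of_epi (H.map f) x
  have hxd : x' ≫ H.map d₁ = 0 := by
    rw [← hfι, H.map_comp, ← Category.assoc, ← hx', Category.assoc, hx, comp_zero]
  rw [ShortComplex.exact_iff_exact_up_to_refinements] at h2
  obtain ⟨V'', π₃, hπ₃, u, hu⟩ := h2 x' (by exact hxd)
  have hfin : (π₃ ≫ π₂) ≫ x = 0 := by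
    have hd2f : P.complex.d 2 1 ≫ f = 0 := by
      rw [← cancel_mono (kernel.ι π₀)]
      simp only [Category.assoc, hfι, hd₁, zero_comp]
      exact P.complex.d_comp_d 2 1 0
    calc (π₃ ≫ π₂) ≫ x = π₃ ≫ x' ≫ H.map f := by rw [Category.assoc, hx']
    _ = u ≫ H.map (P.complex.d 2 1) ≫ H.map f := by
        have := hu
        simp only [HomologicalComplex.sc'] at this
        rw [← Category.assoc]
        exact (hu =≫ H.map f).trans (Category.assoc _ _ _)
    _ = u ≫ H.map (P.complex.d 2 1 ≫ f) := by rw [H.map_comp]; rfl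
    _ = 0 := by rw [hd2f, H.map_zero]; exact comp_zero
  haveI : Epi (π₃ ≫ π₂) := epi_comp _ _
  exact zero_of_epi_comp (π₃ ≫ π₂) hfin

lemma stmt2_aux_iso [EnoughProjectives A] (H : A ⥤ D) [H.Additive] [PreservesFiniteColimits H]
    {X M : A} (η : X ⟶ M)
    (hK : IsZero (H.obj (kernel η)))
    (hQ : IsZero (H.obj (cokernel η)))
    (hQ1 : IsZero ((H.leftDerived 1).obj (cokernel η))) :
    IsIso (H.map η) := by
  haveI : H.PreservesEpimorphisms := inferInstance
  set q := cokernel.π η with hq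
  set m := Abelian.image.ι η with hm
  set e := Abelian.factorThruImage η with he
  have hem : e ≫ m = η := Abelian.image.fac η
  -- the short complex I ⟶ M ⟶ Q
  have hmq : m ≫ q = 0 := kernel.condition q
  set S₂ : ShortComplex A := ShortComplex.mk m q hmq with hS₂def
  have hS₂ : S₂.Exact := ShortComplex.exact_of_f_is_kernel _ (kernelIsKernel q)
  have hS₂D : (S₂.map H).Exact :=
    hS₂.map_of_epi_of_preservesCokernel H inferInstance inferInstance
  -- H.map m is epi
  have hepi_m : Epi (H.map m) := by
    have : (S₂.map H).g = 0 := hQ.eq_of_tgt _ _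
    exact hS₂D.epi_f this
  -- H.map e is epi
  have hepi_e : Epi (H.map e) := inferInstance
  -- the short complex K ⟶ X ⟶ I
  have hke : kernel.ι η ≫ e = 0 := by
    rw [← cancel_mono m]
    simp [hem]
  set S₁ : ShortComplex A := ShortComplex.mk (kernel.ι η) e hke with hS₁def
  have hS₁ : S₁.Exact := by
    apply ShortComplex.exact_of_f_is_kernel
    refine KernelFork.IsLimit.ofι _ _
      (fun {W} x hx => kernel.lift η x (by rw [← hem, ← Category.assoc, hx, zero_comp]))
      (fun {W} x hx => kernel.lift_ι _ _ _) (fun {W} x hx w hw => ?_)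
    rw [← cancel_mono (kernel.ι η), hw, kernel.lift_ι]
  have hS₁D : (S₁.map H).Exact :=
    hS₁.map_of_epi_of_preservesCokernel H inferInstance inferInstance
  have hmono_e : Mono (H.map e) := by
    have : (S₁.map H).f = 0 := hK.eq_of_src _ _
    exact hS₁D.mono_g this
  -- now the hard part : H.map m is mono
  have hmono_m : Mono (H.map m) := by
    set P := ProjectiveResolution.of (cokernel η) with hP
    set π₀ : P.complex.X 0 ⟶ cokernel η := P.π.f 0 with hπ₀
    haveI : Epi π₀ := by rw [hπ₀]; exact (inferInstance : Epi (P.π.f 0))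
    have hι : Mono (H.map (kernel.ι π₀)) := stmt2_aux_mono H P hQ1
    set ι := kernel.ι π₀ with hι'
    -- lift of π₀ along q
    haveI : Epi q := by rw [hq]; infer_instance
    set l := Projective.factorThru π₀ q with hl'
    have hl : l ≫ q = π₀ := Projective.factorThru_comp _ _
    -- induced map T ⟶ I
    have hιl : (ι ≫ l) ≫ q = 0 := by rw [Category.assoc, hl, kernel.condition]
    set t : kernel π₀ ⟶ Abelian.image η := kernel.lift q (ι ≫ l) hιl with ht'
    have ht : t ≫ m = ι ≫ l := kernel.lift_ι _ _ _
    -- the short complex T ⟶ C₀ ⊞ I ⟶ M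
    set φ := biprod.lift ι t with hφ'
    set ψ := biprod.desc l (-m) with hψ'
    have hφψ : φ ≫ ψ = 0 := by
      rw [hφ', hψ', biprod.lift_desc, Preadditive.comp_neg, ht]
      abel
    set S₃ : ShortComplex A := ShortComplex.mk φ ψ hφψ with hS₃def
    have hS₃ : S₃.Exact := by
      rw [ShortComplex.exact_iff_exact_up_to_refinements]
      intro V z hz
      have hzz : biprod.lift (z ≫ biprod.fst) (z ≫ biprod.snd) = z := by
        apply biprod.hom_ext <;> simp
      have hz2 : (z ≫ biprod.fst) ≫ l = (z ≫ biprod.snd) ≫ m := by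
        have h0 : (z ≫ biprod.fst) ≫ l + (z ≫ biprod.snd) ≫ (-m) = 0 := by
          rw [← biprod.lift_desc, hzz]
          exact hz
        rw [Preadditive.comp_neg] at h0
        rw [← sub_eq_zero]
        linear_combination (norm := abel) h0
      have h1 : (z ≫ biprod.fst) ≫ π₀ = 0 := by
        rw [← hl, ← Category.assoc, hz2, Category.assoc, kernel.condition, comp_zero]
      refine ⟨V, 𝟙 V, inferInstance, kernel.lift π₀ (z ≫ biprod.fst) h1, ?_⟩
      have hw1 : kernel.lift π₀ (z ≫ biprod.fst) h1 ≫ ι = z ≫ biprod.fst := kernel.lift_ι _ _ _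
      have hw2 : kernel.lift π₀ (z ≫ biprod.fst) h1 ≫ t = z ≫ biprod.snd := by
        rw [← cancel_mono m, Category.assoc, ht, ← Category.assoc, hw1, hz2]
      rw [Category.id_comp]
      apply biprod.hom_ext
      · change _ = (_ ≫ φ) ≫ _; simp [hφ', hw1]
      · change _ = (_ ≫ φ) ≫ _; simp [hφ', hw2]
    have hψepi : Epi ψ := by
      rw [Preadditive.epi_iff_cancel_zero]
      intro C c hc
      have hlc : l ≫ c = 0 := by
        have := biprod.inl ≫= hc
        simpa [hψ'] using this
      have hmc : m ≫ c = 0 := by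
        have := biprod.inr ≫= hc
        simp only [hψ', biprod.inr_desc_assoc, comp_zero] at this
        rw [← neg_eq_zero, ← Preadditive.neg_comp]
        exact this
      haveI : Epi S₂.g := by show Epi q; infer_instance
      have hd : q ≫ hS₂.desc c hmc = c := hS₂.g_desc c hmc
      have : π₀ ≫ hS₂.desc c hmc = 0 := by rw [← hl, Category.assoc, hd, hlc]
      have h0 : hS₂.desc c hmc = 0 := zero_of_epi_comp π₀ this
      rw [← hd, h0, comp_zero]
    have hS₃D : (S₃.map H).Exact :=
      hS₃.map_of_epi_of_preservesCokernel H hψepi inferInstance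
    rw [Preadditive.mono_iff_cancel_zero]
    intro V x hx
    have hy : (x ≫ H.map biprod.inr) ≫ H.map ψ = 0 := by
      rw [Category.assoc, ← H.map_comp]
      have : (biprod.inr : _ ⟶ _ ⊞ _) ≫ ψ = -m := biprod.inr_desc _ _
      rw [this, H.map_neg, Preadditive.comp_neg, hx, neg_zero]
    rw [ShortComplex.exact_iff_exact_up_to_refinements] at hS₃D
    obtain ⟨V', π₁, hπ₁, w, hw⟩ := hS₃D (x ≫ H.map biprod.inr) hy
    change V' ⟶ H.obj (kernel π₀) at w
    have hw' : π₁ ≫ x ≫ H.map biprod.inr = w ≫ H.map φ := hw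
    have hwι : w ≫ H.map ι = 0 := by
      have hfst : φ ≫ (biprod.fst : _ ⊞ _ ⟶ _) = ι := biprod.lift_fst _ _
      calc w ≫ H.map ι = w ≫ H.map φ ≫ H.map biprod.fst := by
            rw [← H.map_comp, hfst]
      _ = (π₁ ≫ x ≫ H.map biprod.inr) ≫ H.map biprod.fst := by
            rw [← Category.assoc, ← hw', Category.assoc, Category.assoc]
      _ = 0 := by
            rw [Category.assoc, Category.assoc, ← H.map_comp, biprod.inr_fst,
              H.map_zero, comp_zero, comp_zero]
    have hw0 : w = 0 := zero_of_comp_mono _ hwι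
    have : π₁ ≫ x = 0 := by
      have h2 : π₁ ≫ x ≫ H.map (biprod.inr : _ ⟶ P.complex.X 0 ⊞ Abelian.image η) = 0 := by
        rw [hw', hw0, zero_comp]
      have h3 : (π₁ ≫ x ≫ H.map (biprod.inr : _ ⟶ P.complex.X 0 ⊞ Abelian.image η)) ≫
          H.map biprod.snd = 0 := by
        rw [h2, zero_comp]
      rw [Category.assoc, Category.assoc, ← H.map_comp, biprod.inr_snd, H.map_id,
        Category.comp_id] at h3
      exact h3
    exact zero_of_epi_comp π₁ this
  have : IsIso (H.map e) := isIso_of_mono_of_epi _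
  have : IsIso (H.map m) := isIso_of_mono_of_epi _
  rw [← hem, H.map_comp]
  infer_instance

end Stmt2Aux

/-- Under the hypotheses of the lemma, `G := π' ∘ F ∘ ω` is right exact,
i.e. preserves finite colimits. -/
theorem stmt2
    -- 𝒜 is a Grothendieck abelian category with enough projectives
    (A : Type u) [Category.{v} A] [Abelian A] [HasColimits A] [AB5 A] [HasSeparator A]
    [EnoughProjectives A]
    -- 𝒜/𝒮 is a Grothendieck abelian category
    (QA : Type u) [Category.{v} QA] [Abelian QA] [HasColimits QA] [AB5 QA] [HasSeparator QA]
    -- ℬ is a Grothendieck abelian category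
    (B : Type u) [Category.{v} B] [Abelian B] [HasColimits B] [AB5 B] [HasSeparator B]
    -- ℬ/𝒯 is a Grothendieck abelian category
    (QB : Type u) [Category.{v} QB] [Abelian QB] [HasColimits QB] [AB5 QB] [HasSeparator QB]
    -- π : 𝒜 ⥤ 𝒜/𝒮 is a Gabriel localization: exact with fully faithful right adjoint ω
    (π : A ⥤ QA) [π.Additive] [PreservesFiniteLimits π] [PreservesFiniteColimits π]
    (ω : QA ⥤ A) [ω.Full] [ω.Faithful] (adj : π ⊣ ω)
    -- π' : ℬ ⥤ ℬ/𝒯 is a Gabriel localization: exact with fully faithful right adjoint ω'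
    (π' : B ⥤ QB) [π'.Additive] [PreservesFiniteLimits π'] [PreservesFiniteColimits π']
    (ω' : QB ⥤ B) [ω'.Full] [ω'.Faithful] (adj' : π' ⊣ ω')
    -- F is additive and right exact
    (F : A ⥤ B) [F.Additive] [PreservesFiniteColimits F]
    -- π' ∘ F vanishes on the kernel of π
    (hker : ∀ s : A, IsZero (π.obj s) → IsZero (π'.obj (F.obj s)))
    -- L₁(π' ∘ F) vanishes on the kernel of π
    (hL1 : ∀ s : A, IsZero (π.obj s) → IsZero (((F ⋙ π').leftDerived 1).obj s))
    :
    Nonempty (PreservesFiniteColimits (ω ⋙ F ⋙ π')) := by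

  haveI : PreservesFiniteColimits (F ⋙ π') := comp_preservesFiniteColimits F π'
  -- each component of the unit is sent to an isomorphism by `F ⋙ π'`
  have hiso : ∀ X : A, IsIso ((F ⋙ π').map (adj.unit.app X)) := by
    intro X
    have hη : IsIso (π.map (adj.unit.app X)) := by
      have h : IsIso (π.map (adj.unit.app X) ≫ adj.counit.app (π.obj X)) := by
        erw [adj.left_triangle_components]
        exact IsIso.id _
      exact IsIso.of_isIso_comp_right _ (adj.counit.app (π.obj X))
    have hKπ : IsZero (π.obj (kernel (adj.unit.app X))) := by
      refine IsZero.of_iso ?_ (PreservesKernel.iso π (adj.unit.app X))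
      refine IsZero.of_iso (isZero_zero QA) (kernel.ofMono (π.map (adj.unit.app X)))
    have hQπ : IsZero (π.obj (cokernel (adj.unit.app X))) := by
      refine IsZero.of_iso ?_ (PreservesCokernel.iso π (adj.unit.app X))
      refine IsZero.of_iso (isZero_zero QA) (cokernel.ofEpi (π.map (adj.unit.app X)))
    exact stmt2_aux_iso (F ⋙ π') (adj.unit.app X)
      (hker _ hKπ) (hker _ hQπ) (hL1 _ hQπ)
  -- hence `F ⋙ π' ≅ π ⋙ (ω ⋙ F ⋙ π')`
  let e : F ⋙ π' ≅ π ⋙ ω ⋙ F ⋙ π' :=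
    NatIso.ofComponents (fun X => @asIso _ _ _ _ _ (hiso X)) (by
      intro X Y f
      have h := adj.unit.naturality f
      simp only [Functor.id_map, Functor.comp_map] at h
      dsimp
      rw [← Functor.map_comp, ← Functor.map_comp, ← Functor.map_comp, ← Functor.map_comp, h])
  refine ⟨⟨fun {J} _ _ => ⟨fun {K} => ?_⟩⟩⟩
  have hc₀ := colimit.isColimit (K ⋙ ω)
  haveI : PreservesColimit (K ⋙ ω) (π ⋙ ω ⋙ F ⋙ π') :=
    preservesColimit_of_natIso _ e
  have h2 : IsColimit ((ω ⋙ F ⋙ π').mapCocone (π.mapCocone (colimit.cocone (K ⋙ ω)))) :=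
    isColimitOfPreserves (π ⋙ ω ⋙ F ⋙ π') hc₀
  have h3 : PreservesColimit ((K ⋙ ω) ⋙ π) (ω ⋙ F ⋙ π') :=
    preservesColimit_of_preserves_colimit_cocone (isColimitOfPreserves π hc₀) h2
  haveI := h3
  refine preservesColimit_of_iso_diagram (ω ⋙ F ⋙ π')
    (Functor.associator K ω π ≪≫ Functor.isoWhiskerLeft K (asIso adj.counit) ≪≫ K.rightUnitor)
end

section
/- Let 𝒜 and ℬ be Grothendieck abelian categories, let π : 𝒜 → 𝒜/𝒮 and π' : ℬ → ℬ/𝒯 be Gabriel localizations with fully faithful right adjoints ω and ω'. Assume 𝒜 has enough projectives. Let F : 𝒜 → ℬ be an additive right exact functor such that π'(F(s)) ≅ 0 for every object s with π(s) ≅ 0, and such that L₁(π'∘F)(s) ≅ 0 for every object s with π(s) ≅ 0. If F preserves small coproducts, then the functor G := π'∘F∘ω : 𝒜/𝒮 → ℬ/𝒯 preserves small coproducts. -/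
open CategoryTheory CategoryTheory.Limits

universe v u

namespace Stmt3Aux

open CategoryTheory.Abelian

open scoped Pseudoelement

variable {A : Type*} [Category A] [Abelian A] {B : Type*} [Category B] [Abelian B]

/-- A right exact functor sends exact-with-epi sequences to exact-with-epi sequences. -/
lemma map_exact_of_exact_of_epi (G : A ⥤ B) [G.Additive] [PreservesFiniteColimits G]
    (S : ShortComplex A) (hS : S.Exact) (hg : Epi S.g) :
    (S.map G).Exact ∧ Epi (G.map S.g) := by
  have h := (Functor.preservesFiniteColimits_tfae G).out 3 1
  exact h.1 inferInstance S ⟨hS, hg⟩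

/-- If `0 ⟶ N ⟶ P ⟶ t ⟶ 0` is a short exact sequence with `P` projective and
`L₁G(t) = 0` where `G` is right exact, then `G(N) ⟶ G(P)` is mono. -/
lemma mono_map_of_shortExact [EnoughProjectives A]
    (G : A ⥤ B) [G.Additive] [PreservesFiniteColimits G]
    {N P t : A} (f : N ⟶ P) (g : P ⟶ t) (w : f ≫ g = 0)
    [Mono f] [Epi g] [Projective P]
    (hex : (ShortComplex.mk f g w).Exact)
    (hD : IsZero ((G.leftDerived 1).obj t)) :
    Mono (G.map f) := by
  classical
  let R := ProjectiveResolution.of t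
  set π0 : R.complex.X 0 ⟶ t := R.π.f 0 with hπ0def
  set d1 : R.complex.X 1 ⟶ R.complex.X 0 := R.complex.d 1 0 with hd1def
  set d2 : R.complex.X 2 ⟶ R.complex.X 1 := R.complex.d 2 1 with hd2def
  -- exactness of the `G`-mapped resolution in degree 1
  have hzero : IsZero ((((G.mapHomologicalComplex (ComplexShape.down ℕ)).obj
      R.complex)).homology 1) := hD.of_iso (R.isoLeftDerivedObj G 1).symm
  have hEx1 : (((G.mapHomologicalComplex (ComplexShape.down ℕ)).obj R.complex)).ExactAt 1 := by
    rw [HomologicalComplex.exactAt_iff_isZero_homology]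
    exact hzero
  have hexG : (ShortComplex.mk (G.map d2) (G.map d1)
      (by rw [← G.map_comp, HomologicalComplex.d_comp_d, G.map_zero])).Exact :=
    (HomologicalComplex.exactAt_iff'
      ((G.mapHomologicalComplex (ComplexShape.down ℕ)).obj R.complex) 2 1 0
      (by simp) (by simp)).1 hEx1
  -- exactness of the resolution in degree 0
  have hS0 : (ShortComplex.mk d1 π0 R.complex_d_comp_π_f_zero).Exact ∧ Epi π0 :=
    (ShortComplex.exact_and_epi_g_iff_g_is_cokernel _).2 ⟨R.isColimitCokernelCofork⟩
  haveI : Epi π0 := hS0.2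
  set ι0 : kernel π0 ⟶ R.complex.X 0 := kernel.ι π0 with hι0def
  set e : R.complex.X 1 ⟶ kernel π0 :=
    kernel.lift π0 d1 R.complex_d_comp_π_f_zero with hedef
  have he : e ≫ ι0 = d1 := kernel.lift_ι _ _ _
  haveI hepie : Epi e := (ShortComplex.exact_iff_epi_kernel_lift _).1 hS0.1
  haveI : Epi (G.map e) := preserves_epi_of_preservesColimit G e
  -- Stage 1 : `G ι0` is mono
  haveI hmono0 : Mono (G.map ι0) := by
    apply Pseudoelement.mono_of_zero_of_map_zero
    intro x hx
    obtain ⟨y, hy⟩ := Pseudoelement.pseudo_surjective_of_epi (G.map e) x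
    have hd1y : Pseudoelement.pseudoApply (G.map d1) y = 0 := by
      rw [← he, G.map_comp, Pseudoelement.comp_apply, hy, hx]
    obtain ⟨z, hz⟩ := Pseudoelement.pseudo_exact_of_exact hexG y hd1y
    have hde : d2 ≫ e = 0 := by
      rw [← cancel_mono ι0, Category.assoc, he, zero_comp]
      exact R.complex.d_comp_d 2 1 0
    calc x = Pseudoelement.pseudoApply (G.map e) y := hy.symm
    _ = Pseudoelement.pseudoApply (G.map e) (Pseudoelement.pseudoApply (G.map d2) z) := by
        rw [hz]
    _ = Pseudoelement.pseudoApply (G.map (d2 ≫ e)) z := by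
        rw [G.map_comp, Pseudoelement.comp_apply]
    _ = 0 := by rw [hde, G.map_zero, Pseudoelement.zero_apply]
  -- Stage 2 : comparison maps
  set α : P ⟶ R.complex.X 0 := Projective.factorThru g π0 with hαdef
  have hα : α ≫ π0 = g := Projective.factorThru_comp _ _
  set γ : R.complex.X 0 ⟶ P := Projective.factorThru π0 g with hγdef
  have hγ : γ ≫ g = π0 := Projective.factorThru_comp _ _
  set β : N ⟶ kernel π0 := kernel.lift π0 (f ≫ α)
    (by rw [Category.assoc, hα, w]) with hβdef
  have hβ : β ≫ ι0 = f ≫ α := kernel.lift_ι _ _ _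
  have hfk : IsLimit (KernelFork.ofι f w) := hex.fIsKernel
  obtain ⟨δ, hδ⟩ := KernelFork.IsLimit.lift' hfk (ι0 ≫ γ)
    (by rw [Category.assoc, hγ, kernel.condition])
  have hδ' : δ ≫ f = ι0 ≫ γ := by simpa using hδ
  obtain ⟨h, hh⟩ := KernelFork.IsLimit.lift' hfk (𝟙 P - α ≫ γ)
    (by rw [Preadditive.sub_comp, Category.id_comp, Category.assoc, hγ, hα, sub_self])
  have hh' : h ≫ f = 𝟙 P - α ≫ γ := by simpa using hh
  have key : β ≫ δ + f ≫ h = 𝟙 N := by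
    rw [← cancel_mono f]
    rw [Preadditive.add_comp, Category.assoc, hδ', Category.assoc, hh', Category.id_comp,
      Preadditive.comp_sub, Category.comp_id, ← Category.assoc, hβ, Category.assoc]
    abel
  refine Preadditive.mono_of_cancel_zero _ (fun {Z} z hz => ?_)
  have h1 : z ≫ G.map β = 0 := by
    rw [← cancel_mono (G.map ι0), Category.assoc, ← G.map_comp, hβ, G.map_comp,
      ← Category.assoc, hz, zero_comp, zero_comp]
  calc z = z ≫ 𝟙 (G.obj N) := (Category.comp_id z).symm
  _ = z ≫ G.map (𝟙 N) := by rw [G.map_id]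
  _ = z ≫ (G.map (β ≫ δ) + G.map (f ≫ h)) := by rw [← Functor.map_add, key]
  _ = (z ≫ G.map β) ≫ G.map δ + (z ≫ G.map f) ≫ G.map h := by
      rw [Preadditive.comp_add, G.map_comp, G.map_comp, Category.assoc, Category.assoc]
  _ = 0 := by rw [h1, hz, zero_comp, zero_comp, add_zero]

/-- If `G` is right exact, kills the `π`-torsion objects and has `L₁G` killing the
`π`-torsion objects, then `G` inverts every morphism inverted by `π`. -/
lemma isIso_map_of_isIso_map [EnoughProjectives A]
    {QA : Type*} [Category QA] [Abelian QA]
    (G : A ⥤ B) [G.Additive] [PreservesFiniteColimits G]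
    (π : A ⥤ QA) [PreservesFiniteLimits π] [PreservesFiniteColimits π]
    (hker : ∀ s : A, IsZero (π.obj s) → IsZero (G.obj s))
    (hL1 : ∀ s : A, IsZero (π.obj s) → IsZero ((G.leftDerived 1).obj s))
    {a b : A} (f : a ⟶ b) (hf : IsIso (π.map f)) : IsIso (G.map f) := by
  classical
  have hfac : Limits.factorThruImage f ≫ Limits.image.ι f = f := Limits.image.fac f
  set p := Limits.factorThruImage f with hpdef
  set ι := Limits.image.ι f with hιdef
  haveI : Epi (π.map p) := preserves_epi_of_preservesColimit π p
  haveI : Mono (π.map ι) := preserves_mono_of_preservesLimit π ι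
  have hsplit : π.map p ≫ (π.map ι ≫ inv (π.map f)) = 𝟙 _ := by
    rw [← Category.assoc, ← π.map_comp, hfac, IsIso.hom_inv_id]
  haveI : IsSplitMono (π.map p) := IsSplitMono.mk' ⟨_, hsplit⟩
  haveI : IsIso (π.map p) := isIso_of_mono_of_epi _
  have hιeq : π.map ι = inv (π.map p) ≫ π.map f := by
    rw [IsIso.eq_inv_comp, ← π.map_comp, hfac]
  haveI : IsIso (π.map ι) := by rw [hιeq]; infer_instance
  -- `G p` is an isomorphism
  have hz1 : IsZero (π.obj (kernel p)) :=
    IsZero.of_iso (IsZero.of_iso (isZero_zero _) (kernel.ofMono (π.map p)))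
      (PreservesKernel.iso π p)
  have hGk : IsZero (G.obj (kernel p)) := hker _ hz1
  obtain ⟨hmex, hmepi⟩ := map_exact_of_exact_of_epi G _ (ShortComplex.exact_kernel p)
    inferInstance
  have hfzero : G.map (kernel.ι p) = 0 := hGk.eq_of_src _ _
  haveI : Mono (G.map p) := (ShortComplex.exact_iff_mono _ hfzero).1 hmex
  haveI : Epi (G.map p) := hmepi
  haveI : IsIso (G.map p) := isIso_of_mono_of_epi _
  -- `G ι` is epi
  have hz2 : IsZero (π.obj (cokernel ι)) :=
    IsZero.of_iso (IsZero.of_iso (isZero_zero _) (cokernel.ofEpi (π.map ι)))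
      (PreservesCokernel.iso π ι)
  have hGc : IsZero (G.obj (cokernel ι)) := hker _ hz2
  obtain ⟨hcex, _⟩ := map_exact_of_exact_of_epi G _ (ShortComplex.exact_cokernel ι)
    inferInstance
  have hgzero : G.map (cokernel.π ι) = 0 := hGc.eq_of_tgt _ _
  haveI : Epi (G.map ι) := (ShortComplex.exact_iff_epi _ hgzero).1 hcex
  -- `G ι` is mono (the chase)
  set t := cokernel ι with htdef
  set q : Projective.over b ⟶ b := Projective.π b with hqdef
  set pt : Projective.over b ⟶ t := q ≫ cokernel.π ι with hptdef
  haveI : Epi pt := epi_comp _ _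
  set ιN := kernel.ι pt with hιNdef
  haveI hNm : Mono (G.map ιN) := mono_map_of_shortExact G ιN pt (kernel.condition pt)
    (ShortComplex.exact_kernel pt) (hL1 t hz2)
  have hIK : IsLimit (KernelFork.ofι ι (cokernel.condition ι)) :=
    (ShortComplex.exact_cokernel ι).fIsKernel
  obtain ⟨r, hr⟩ := KernelFork.IsLimit.lift' hIK (ιN ≫ q)
    (by rw [Category.assoc]; exact kernel.condition pt)
  have hr' : r ≫ ι = ιN ≫ q := by simpa using hr
  haveI : Epi r := by
    apply Pseudoelement.epi_of_pseudo_surjective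
    intro x
    obtain ⟨y, hy⟩ := Pseudoelement.pseudo_surjective_of_epi q
      (Pseudoelement.pseudoApply ι x)
    have hpty : Pseudoelement.pseudoApply pt y = 0 := by
      show Pseudoelement.pseudoApply (q ≫ cokernel.π ι) y = 0
      rw [Pseudoelement.comp_apply, hy, ← Pseudoelement.comp_apply, cokernel.condition,
        Pseudoelement.zero_apply]
    obtain ⟨z, hz⟩ := Pseudoelement.pseudo_exact_of_exact
      (ShortComplex.exact_kernel pt) y hpty
    refine ⟨z, Pseudoelement.pseudo_injective_of_mono ι ?_⟩
    rw [← Pseudoelement.comp_apply, hr', Pseudoelement.comp_apply, hz, hy]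
  obtain ⟨hqex, _⟩ := map_exact_of_exact_of_epi G _ (ShortComplex.exact_kernel q)
    inferInstance
  set μ : kernel q ⟶ kernel pt := kernel.lift pt (kernel.ι q)
    (by show kernel.ι q ≫ q ≫ cokernel.π ι = 0
        rw [← Category.assoc, kernel.condition, zero_comp]) with hμdef
  have hμ : μ ≫ ιN = kernel.ι q := kernel.lift_ι _ _ _
  have hμr : μ ≫ r = 0 := by
    rw [← cancel_mono ι, Category.assoc, hr', ← Category.assoc, hμ, kernel.condition,
      zero_comp]
  haveI : Epi (G.map r) := preserves_epi_of_preservesColimit G r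
  haveI : Mono (G.map ι) := by
    apply Pseudoelement.mono_of_zero_of_map_zero
    intro x hx
    obtain ⟨y, hy⟩ := Pseudoelement.pseudo_surjective_of_epi (G.map r) x
    have h2 : Pseudoelement.pseudoApply (G.map q)
        (Pseudoelement.pseudoApply (G.map ιN) y) = 0 := by
      rw [← Pseudoelement.comp_apply, ← G.map_comp, ← hr', G.map_comp,
        Pseudoelement.comp_apply, hy, hx]
    obtain ⟨w', hw'⟩ : ∃ w' : Pseudoelement (G.obj (kernel q)),
        Pseudoelement.pseudoApply (G.map (kernel.ι q)) w' =
          Pseudoelement.pseudoApply (G.map ιN) y :=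
      Pseudoelement.pseudo_exact_of_exact hqex _ h2
    have h3 : Pseudoelement.pseudoApply (G.map ιN)
        (Pseudoelement.pseudoApply (G.map μ) w') =
        Pseudoelement.pseudoApply (G.map ιN) y := by
      rw [← Pseudoelement.comp_apply, ← G.map_comp, hμ]
      exact hw'
    have h4 := Pseudoelement.pseudo_injective_of_mono (G.map ιN) h3
    calc x = Pseudoelement.pseudoApply (G.map r) y := hy.symm
    _ = Pseudoelement.pseudoApply (G.map r) (Pseudoelement.pseudoApply (G.map μ) w') := by
        rw [h4]
    _ = Pseudoelement.pseudoApply (G.map (μ ≫ r)) w' := by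
        rw [G.map_comp, Pseudoelement.comp_apply]
    _ = 0 := by rw [hμr, G.map_zero, Pseudoelement.zero_apply]
  haveI : IsIso (G.map ι) := isIso_of_mono_of_epi _
  rw [← hfac, G.map_comp]
  infer_instance

end Stmt3Aux

/-- Under the hypotheses of the lemma, if `F` preserves small coproducts
then so does `G := π' ∘ F ∘ ω`. -/
theorem stmt3
    -- 𝒜 is a Grothendieck abelian category with enough projectives
    (A : Type u) [Category.{v} A] [Abelian A] [HasColimits A] [AB5 A] [HasSeparator A]
    [EnoughProjectives A]
    -- 𝒜/𝒮 is a Grothendieck abelian category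
    (QA : Type u) [Category.{v} QA] [Abelian QA] [HasColimits QA] [AB5 QA] [HasSeparator QA]
    -- ℬ is a Grothendieck abelian category
    (B : Type u) [Category.{v} B] [Abelian B] [HasColimits B] [AB5 B] [HasSeparator B]
    -- ℬ/𝒯 is a Grothendieck abelian category
    (QB : Type u) [Category.{v} QB] [Abelian QB] [HasColimits QB] [AB5 QB] [HasSeparator QB]
    -- π : 𝒜 ⥤ 𝒜/𝒮 is a Gabriel localization: exact with fully faithful right adjoint ω
    (π : A ⥤ QA) [π.Additive] [PreservesFiniteLimits π] [PreservesFiniteColimits π]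
    (ω : QA ⥤ A) [ω.Full] [ω.Faithful] (adj : π ⊣ ω)
    -- π' : ℬ ⥤ ℬ/𝒯 is a Gabriel localization: exact with fully faithful right adjoint ω'
    (π' : B ⥤ QB) [π'.Additive] [PreservesFiniteLimits π'] [PreservesFiniteColimits π']
    (ω' : QB ⥤ B) [ω'.Full] [ω'.Faithful] (adj' : π' ⊣ ω')
    -- F is additive and right exact
    (F : A ⥤ B) [F.Additive] [PreservesFiniteColimits F]
    -- π' ∘ F vanishes on the kernel of π
    (hker : ∀ s : A, IsZero (π.obj s) → IsZero (π'.obj (F.obj s)))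
    -- L₁(π' ∘ F) vanishes on the kernel of π
    (hL1 : ∀ s : A, IsZero (π.obj s) → IsZero (((F ⋙ π').leftDerived 1).obj s))
    -- F preserves small coproducts
    (hF : ∀ ι : Type v, PreservesColimitsOfShape (Discrete ι) F) :
    ∀ ι : Type v, Nonempty (PreservesColimitsOfShape (Discrete ι) (ω ⋙ F ⋙ π')) := by
  intro ι
  haveI := hF ι
  haveI : PreservesColimits π := adj.leftAdjoint_preservesColimits
  haveI : PreservesColimits π' := adj'.leftAdjoint_preservesColimits
  haveI : PreservesFiniteColimits (F ⋙ π') := comp_preservesFiniteColimits F π'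
  haveI : PreservesColimitsOfShape (Discrete ι) (F ⋙ π') := inferInstance
  have hker' : ∀ s : A, IsZero (π.obj s) → IsZero ((F ⋙ π').obj s) := hker
  -- the components of the unit become isomorphisms after applying `F ⋙ π'`
  have hiso : ∀ a : A, IsIso ((F ⋙ π').map (adj.unit.app a)) := by
    intro a
    have h1 : π.map (adj.unit.app a) ≫ adj.counit.app (π.obj a) = 𝟙 _ :=
      adj.left_triangle_components a
    haveI : IsIso adj.counit := adj.counit_isIso_of_R_fully_faithful
    haveI : IsIso (adj.counit.app (π.obj a)) := inferInstance
    have h2 : IsIso (π.map (adj.unit.app a)) := IsIso.of_isIso_fac_right h1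
    exact Stmt3Aux.isIso_map_of_isIso_map (F ⋙ π') π hker' hL1 _ h2
  -- the natural isomorphism `F ⋙ π' ≅ π ⋙ ω ⋙ F ⋙ π'`
  let e : (F ⋙ π') ≅ π ⋙ ω ⋙ F ⋙ π' :=
    NatIso.ofComponents
      (fun a => haveI := hiso a; asIso ((F ⋙ π').map (adj.unit.app a)))
      (fun {a b} f => by
        dsimp
        simp only [← Functor.map_comp]
        congr 2
        simpa using adj.unit.naturality f)
  haveI : PreservesColimitsOfShape (Discrete ι) (π ⋙ ω ⋙ F ⋙ π') :=
    preservesColimitsOfShape_of_natIso e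
  constructor
  constructor
  intro K
  have hc1 : IsColimit (π.mapCocone (colimit.cocone (K ⋙ ω))) :=
    isColimitOfPreserves π (colimit.isColimit _)
  have hc2 : IsColimit ((ω ⋙ F ⋙ π').mapCocone (π.mapCocone (colimit.cocone (K ⋙ ω)))) :=
    isColimitOfPreserves (π ⋙ ω ⋙ F ⋙ π') (colimit.isColimit (K ⋙ ω))
  haveI : PreservesColimit ((K ⋙ ω) ⋙ π) (ω ⋙ F ⋙ π') :=
    preservesColimit_of_preserves_colimit_cocone hc1 hc2
  haveI : IsIso adj.counit := adj.counit_isIso_of_R_fully_faithful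
  exact preservesColimit_of_iso_diagram (ω ⋙ F ⋙ π')
    (Functor.associator K ω π ≪≫ Functor.isoWhiskerLeft K (asIso adj.counit) ≪≫ K.rightUnitor)
end

section
/- Let 𝒜 and ℬ be Grothendieck abelian categories, let π : 𝒜 → 𝒜/𝒮 and π' : ℬ → ℬ/𝒯 be Gabriel localizations with fully faithful right adjoints ω and ω'. Assume 𝒜 has enough projectives. Let F : 𝒜 → ℬ be an additive right exact functor such that π'(F(s)) ≅ 0 for every object s with π(s) ≅ 0, and such that L₁(π'∘F)(s) ≅ 0 for every object s with π(s) ≅ 0. If F has a right adjoint H : ℬ → 𝒜, then the functor G := π'∘F∘ω : 𝒜/𝒮 → ℬ/𝒯 is left adjoint to the functor π∘H∘ω' : ℬ/𝒯 → 𝒜/𝒮. -/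
open CategoryTheory CategoryTheory.Limits

universe v u

namespace Stmt4Aux

attribute [local instance] CategoryTheory.Abelian.Pseudoelement.objectToSort
  CategoryTheory.Abelian.Pseudoelement.homToFun

open CategoryTheory.Abelian

lemma mono_of_psexact {D : Type*} [Category D] [Abelian D] {X2 X1 K P : D}
    {f : X2 ⟶ X1} {g : X1 ⟶ P} {w : f ≫ g = 0} (hex : (ShortComplex.mk f g w).Exact)
    (e : X1 ⟶ K) (i : K ⟶ P) (hfac : e ≫ i = g) [Epi e] (hfe : f ≫ e = 0) : Mono i := by
  apply Pseudoelement.mono_of_zero_of_map_zero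
  intro a ha
  obtain ⟨b, hb⟩ := Pseudoelement.pseudo_surjective_of_epi e a
  have hgb : g b = 0 := by
    rw [← hfac, Pseudoelement.comp_apply, hb, ha]
  obtain ⟨c, hc⟩ := Pseudoelement.pseudo_exact_of_exact hex b hgb
  rw [← hb, ← hc, ← Pseudoelement.comp_apply, hfe, Pseudoelement.zero_apply]

section ZeroHelper

variable {C D : Type*} [Category C] [Category D] [Preadditive C] [Preadditive D]

lemma hom_eq_zero_of_adj {L : C ⥤ D} {R : D ⥤ C} (adj : L ⊣ R) [L.Additive]
    {X : C} {Y : D} (hX : IsZero (L.obj X)) (f : X ⟶ R.obj Y) : f = 0 := by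
  apply (adj.homEquiv X Y).symm.injective
  simp [Adjunction.homEquiv_counit, hX.eq_zero_of_src (L.map f)]

end ZeroHelper

section Transfer

variable {A QA QB : Type*} [Category A] [Category QA] [Category QB]

/-- Transfer an adjunction along a reflective-type localization. -/
noncomputable def transferAdj {π : A ⥤ QA} {ω : QA ⥤ A} (adj : π ⊣ ω) [ω.Full] [ω.Faithful]
    {L : A ⥤ QB} {R : QB ⥤ A} (adj2 : L ⊣ R)
    (h : ∀ Y, IsIso (adj.unit.app (R.obj Y))) : (ω ⋙ L) ⊣ (R ⋙ π) :=
  Adjunction.mkOfHomEquiv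
    { homEquiv := fun X Y =>
        (adj2.homEquiv (ω.obj X) Y).trans <|
          ((Iso.refl (ω.obj X)).homCongr (@asIso _ _ _ _ (adj.unit.app (R.obj Y)) (h Y))).trans
            (Functor.FullyFaithful.ofFullyFaithful ω).homEquiv.symm
      homEquiv_naturality_left_symm := by
        intro X' X Y f g
        simp [Adjunction.homEquiv_naturality_left_symm]
      homEquiv_naturality_right := by
        intro X Y Y' f g
        apply (Functor.FullyFaithful.ofFullyFaithful ω).map_injective
        simp only [Equiv.trans_apply, Iso.homCongr_apply, Iso.refl_inv, asIso_hom,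
          Functor.comp_obj, Functor.comp_map]
        simp only [Functor.FullyFaithful.homEquiv, Equiv.coe_fn_symm_mk, Iso.homCongr_apply,
          Iso.refl_inv, asIso_hom, Functor.FullyFaithful.map_preimage, Category.id_comp,
          Functor.map_comp, Adjunction.homEquiv_naturality_right, Category.assoc]
        have := adj.unit.naturality (R.map g)
        dsimp at this
        rw [this] }

end Transfer

end Stmt4Aux

/-- Under the hypotheses of the lemma, if `F ⊣ H` then
`G := π' ∘ F ∘ ω` is left adjoint to `π ∘ H ∘ ω'`. -/
theorem stmt4
    -- 𝒜 is a Grothendieck abelian category with enough projectives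
    (A : Type u) [Category.{v} A] [Abelian A] [HasColimits A] [AB5 A] [HasSeparator A]
    [EnoughProjectives A]
    -- 𝒜/𝒮 is a Grothendieck abelian category
    (QA : Type u) [Category.{v} QA] [Abelian QA] [HasColimits QA] [AB5 QA] [HasSeparator QA]
    -- ℬ is a Grothendieck abelian category
    (B : Type u) [Category.{v} B] [Abelian B] [HasColimits B] [AB5 B] [HasSeparator B]
    -- ℬ/𝒯 is a Grothendieck abelian category
    (QB : Type u) [Category.{v} QB] [Abelian QB] [HasColimits QB] [AB5 QB] [HasSeparator QB]
    -- π : 𝒜 ⥤ 𝒜/𝒮 is a Gabriel localization: exact with fully faithful right adjoint ω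
    (π : A ⥤ QA) [π.Additive] [PreservesFiniteLimits π] [PreservesFiniteColimits π]
    (ω : QA ⥤ A) [ω.Full] [ω.Faithful] (adj : π ⊣ ω)
    -- π' : ℬ ⥤ ℬ/𝒯 is a Gabriel localization: exact with fully faithful right adjoint ω'
    (π' : B ⥤ QB) [π'.Additive] [PreservesFiniteLimits π'] [PreservesFiniteColimits π']
    (ω' : QB ⥤ B) [ω'.Full] [ω'.Faithful] (adj' : π' ⊣ ω')
    -- F is additive and right exact
    (F : A ⥤ B) [F.Additive] [PreservesFiniteColimits F]
    -- π' ∘ F vanishes on the kernel of π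
    (hker : ∀ s : A, IsZero (π.obj s) → IsZero (π'.obj (F.obj s)))
    -- L₁(π' ∘ F) vanishes on the kernel of π
    (hL1 : ∀ s : A, IsZero (π.obj s) → IsZero (((F ⋙ π').leftDerived 1).obj s))
    -- F has a right adjoint H
    (H : B ⥤ A) (adjFH : F ⊣ H) :
    Nonempty ((ω ⋙ F ⋙ π') ⊣ (ω' ⋙ H ⋙ π)) := by
  have adj2 : (F ⋙ π') ⊣ (ω' ⋙ H) := adjFH.comp adj'
  have key : ∀ Y : QB, IsIso (adj.unit.app ((ω' ⋙ H).obj Y)) := by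
    intro Y
    set Z : A := H.obj (ω'.obj Y) with hZdef
    set η : Z ⟶ ω.obj (π.obj Z) := adj.unit.app Z with hηdef
    -- π.map η is an isomorphism
    have h1 : π.map η ≫ adj.counit.app (π.obj Z) = 𝟙 _ := adj.left_triangle_components Z
    have h2 : IsIso (π.map η ≫ adj.counit.app (π.obj Z)) := by rw [h1]; infer_instance
    have hπη : IsIso (π.map η) := IsIso.of_isIso_comp_right _ (adj.counit.app (π.obj Z))
    -- the kernel of η is killed by π, hence η is mono
    have hKzero : IsZero (π.obj (kernel η)) := by
      refine IsZero.of_iso ?_ (PreservesKernel.iso π η)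
      exact IsZero.of_iso (isZero_zero QA) (kernel.ofMono (π.map η))
    have hmono : Mono η := by
      apply Abelian.mono_of_kernel_ι_eq_zero
      exact Stmt4Aux.hom_eq_zero_of_adj adj2 (hker _ hKzero) (kernel.ι η)
    -- the cokernel of η is killed by π
    have hCS : IsZero (π.obj (cokernel η)) := by
      refine IsZero.of_iso ?_ (PreservesCokernel.iso π η)
      exact IsZero.of_iso (isZero_zero QA) (cokernel.ofEpi (π.map η))
    -- a projective presentation of the cokernel
    set Rres : ProjectiveResolution (cokernel η) := ProjectiveResolution.of _ with hRres
    set P : A := Rres.complex.X 0 with hP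
    set p : P ⟶ cokernel η := Rres.π.f 0 with hp
    have hpe : Epi p := by rw [hp]; exact (inferInstance : Epi (Rres.π.f 0))
    set K : A := kernel p with hK
    set i : K ⟶ P := kernel.ι p with hi
    set e : Rres.complex.X 1 ⟶ K :=
      kernel.lift p (Rres.complex.d 1 0) Rres.complex_d_comp_π_f_zero with he_def
    have he : e ≫ i = Rres.complex.d 1 0 := kernel.lift_ι _ _ _
    have hee : Epi e := by
      have h0 := Rres.exact₀
      rw [ShortComplex.exact_iff_epi_kernel_lift] at h0
      exact h0
    -- (F ⋙ π').map i is epi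
    have hGC : IsZero ((F ⋙ π').obj (cokernel η)) := hker _ hCS
    have hco := Abelian.epiIsCokernelOfKernel _ (kernelIsKernel p)
    have hcoG := isColimitCoforkMapOfIsColimit' (F ⋙ π') _ hco
    have hz1 : IsZero (cokernel ((F ⋙ π').map i)) := by
      refine IsZero.of_iso hGC ?_
      exact IsColimit.coconePointUniqueUpToIso (cokernelIsCokernel _) hcoG
    have hGiepi : Epi ((F ⋙ π').map i) :=
      Abelian.epi_of_cokernel_π_eq_zero _ (hz1.eq_zero_of_tgt _)
    -- (F ⋙ π').map i is mono, using vanishing of L₁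
    have hL1C := hL1 _ hCS
    have hhom : IsZero
        ((((F ⋙ π').mapHomologicalComplex _).obj Rres.complex).homology 1) :=
      IsZero.of_iso hL1C (Rres.isoLeftDerivedObj (F ⋙ π') 1).symm
    have hexAt : (((F ⋙ π').mapHomologicalComplex _).obj Rres.complex).ExactAt 1 :=
      (HomologicalComplex.exactAt_iff_isZero_homology _ _).2 hhom
    have hexS := (HomologicalComplex.exactAt_iff' _ 2 1 0 (by simp) (by simp)).1 hexAt
    have hd2e : Rres.complex.d 2 1 ≫ e = 0 := by
      have : (Rres.complex.d 2 1 ≫ e) ≫ i = 0 ≫ i := by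
        rw [Category.assoc, he, HomologicalComplex.d_comp_d, zero_comp]
      exact (cancel_mono i).1 this
    have hGimono : Mono ((F ⋙ π').map i) := by
      have hFe : Epi ((F ⋙ π').map e) := by rw [Functor.comp_map]; infer_instance
      refine @Stmt4Aux.mono_of_psexact _ _ _ _ _ _ _ _ _ _ hexS ((F ⋙ π').map e) ((F ⋙ π').map i)
        ?_ hFe ?_
      · exact ((F ⋙ π').map_comp e i).symm.trans (congrArg (F ⋙ π').map he)
      · exact ((F ⋙ π').map_comp (Rres.complex.d 2 1) e).symm.trans (by rw [hd2e, Functor.map_zero]; rfl)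
    have hGi : IsIso ((F ⋙ π').map i) := isIso_of_mono_of_epi _
    -- the splitting argument
    set u : P ⟶ ω.obj (π.obj Z) := Projective.factorThru p (cokernel.π η) with hu_def
    have hu : u ≫ cokernel.π η = p := Projective.factorThru_comp _ _
    have hiu : (i ≫ u) ≫ cokernel.π η = 0 := by
      rw [Category.assoc, hu, hi]; exact kernel.condition p
    set g : K ⟶ Z := Abelian.monoLift η (i ≫ u) hiu with hg_def
    have hg : g ≫ η = i ≫ u := Abelian.monoLift_comp _ _ _
    set h : P ⟶ Z :=
      (adj2.homEquiv P Y) (inv ((F ⋙ π').map i) ≫ (adj2.homEquiv K Y).symm g) with hh_def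
    have hih : i ≫ h = g := by
      rw [hh_def, ← Adjunction.homEquiv_naturality_left, IsIso.hom_inv_id_assoc,
        Equiv.apply_symm_apply]
    have hkerc : kernel.ι p ≫ (u - h ≫ η) = 0 := by
      rw [Preadditive.comp_sub, ← Category.assoc, ← hi, hih, hg, sub_self]
    set v : cokernel η ⟶ ω.obj (π.obj Z) := Abelian.epiDesc p (u - h ≫ η) hkerc with hv_def
    have hv : p ≫ v = u - h ≫ η := Abelian.comp_epiDesc _ _ _
    have hv0 : v = 0 := Stmt4Aux.hom_eq_zero_of_adj adj hCS v
    have hsplit : v ≫ cokernel.π η = 𝟙 (cokernel η) := by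
      rw [← cancel_epi p, ← Category.assoc, hv, Preadditive.sub_comp, hu, Category.assoc,
        cokernel.condition, comp_zero, sub_zero, Category.comp_id]
    have hCzero : IsZero (cokernel η) := by
      rw [IsZero.iff_id_eq_zero, ← hsplit, hv0, zero_comp]
    have hepi : Epi η := Abelian.epi_of_cokernel_π_eq_zero _ (hCzero.eq_zero_of_tgt _)
    exact isIso_of_mono_of_epi η
  exact ⟨Stmt4Aux.transferAdj adj adj2 key⟩
end

section
/- Let 𝒜 and ℬ be Grothendieck abelian categories, let π : 𝒜 → 𝒜/𝒮 and π' : ℬ → ℬ/𝒯 be Gabriel localizations with fully faithful right adjoints ω and ω'. Assume 𝒜 has enough projectives and let F : 𝒜 → ℬ be an additive right exact functor. If there exists a functor G : 𝒜/𝒮 → ℬ/𝒯 with G∘π ≅ π'∘F, then the first left derived functor L₁(π'∘F) vanishes on the kernel of π, i.e. L₁(π'∘F)(s) ≅ 0 for every object s of 𝒜 with π(s) ≅ 0. -/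
open CategoryTheory CategoryTheory.Limits

universe v u

/-- Conversely, if some functor `G : 𝒜/𝒮 ⥤ ℬ/𝒯` satisfies
`G ∘ π ≅ π' ∘ F`, then `L₁(π' ∘ F)` vanishes on the kernel of `π`. -/
theorem stmt5
    -- 𝒜 is a Grothendieck abelian category with enough projectives
    (A : Type u) [Category.{v} A] [Abelian A] [HasColimits A] [AB5 A] [HasSeparator A]
    [EnoughProjectives A]
    -- 𝒜/𝒮 is a Grothendieck abelian category
    (QA : Type u) [Category.{v} QA] [Abelian QA] [HasColimits QA] [AB5 QA] [HasSeparator QA]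
    -- ℬ is a Grothendieck abelian category
    (B : Type u) [Category.{v} B] [Abelian B] [HasColimits B] [AB5 B] [HasSeparator B]
    -- ℬ/𝒯 is a Grothendieck abelian category
    (QB : Type u) [Category.{v} QB] [Abelian QB] [HasColimits QB] [AB5 QB] [HasSeparator QB]
    -- π : 𝒜 ⥤ 𝒜/𝒮 is a Gabriel localization: exact with fully faithful right adjoint ω
    (π : A ⥤ QA) [π.Additive] [PreservesFiniteLimits π] [PreservesFiniteColimits π]
    (ω : QA ⥤ A) [ω.Full] [ω.Faithful] (adj : π ⊣ ω)
    -- π' : ℬ ⥤ ℬ/𝒯 is a Gabriel localization: exact with fully faithful right adjoint ω'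
    (π' : B ⥤ QB) [π'.Additive] [PreservesFiniteLimits π'] [PreservesFiniteColimits π']
    (ω' : QB ⥤ B) [ω'.Full] [ω'.Faithful] (adj' : π' ⊣ ω')
    -- F is additive and right exact
    (F : A ⥤ B) [F.Additive] [PreservesFiniteColimits F]
    (G : QA ⥤ QB) (hG : Nonempty (π ⋙ G ≅ F ⋙ π')) :
    ∀ s : A, IsZero (π.obj s) → IsZero (((F ⋙ π').leftDerived 1).obj s) := by
  intro s hs
  obtain ⟨e⟩ := hG
  set H : A ⥤ QB := F ⋙ π' with hH
  obtain ⟨P⟩ : Nonempty (ProjectiveResolution s) := HasProjectiveResolution.out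
  refine IsZero.of_iso ?_ (P.isoLeftDerivedObj H 1)
  have : ((H.mapHomologicalComplex (ComplexShape.down ℕ)).obj P.complex).ExactAt 1 := by
    rw [HomologicalComplex.exactAt_iff' _ 2 1 0 (by simp) (by simp)]
    -- notation
    set d₂ := P.complex.d 2 1
    set d₁ := P.complex.d 1 0
    set p := P.π.f 0
    set ι := kernel.ι p with hι
    set g : P.complex.X 1 ⟶ kernel p :=
      kernel.lift p d₁ P.complex_d_comp_π_f_zero with hg
    have hgι : g ≫ ι = d₁ := kernel.lift_ι _ _ _
    -- the short complex (d₂, d₁) is exact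
    have h₁ : (ShortComplex.mk d₂ d₁ (P.complex.d_comp_d 2 1 0)).Exact := P.exact_succ 0
    -- the short complex (d₁, p) is exact, hence g is epi
    have h₀ : (ShortComplex.mk d₁ p P.complex_d_comp_π_f_zero).Exact :=
      ShortComplex.exact_of_g_is_cokernel _ P.isColimitCokernelCofork
    have hgepi : Epi g := by
      have := (ShortComplex.mk d₁ p P.complex_d_comp_π_f_zero).exact_iff_epi_kernel_lift.1 h₀
      exact this
    -- the short complex (d₂, g) is exact
    have hzero : d₂ ≫ g = 0 := by
      rw [← cancel_mono ι, Category.assoc, hgι, zero_comp]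
      exact P.complex.d_comp_d 2 1 0
    have h₂ : (ShortComplex.mk d₂ g hzero).Exact := by
      refine (ShortComplex.exact_iff_of_epi_of_isIso_of_mono
        (S₁ := ShortComplex.mk d₂ g hzero)
        (S₂ := ShortComplex.mk d₂ d₁ (P.complex.d_comp_d 2 1 0))
        { τ₁ := 𝟙 _, τ₂ := 𝟙 _, τ₃ := ι,
          comm₁₂ := by simp, comm₂₃ := by simpa using hgι.symm }).2 h₁
    -- apply the right exact functor H to (d₂, g)
    have hHrex : PreservesFiniteColimits H := CategoryTheory.Limits.comp_preservesFiniteColimits F π'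
    have hrex2 : ∀ (S : ShortComplex A), S.Exact ∧ Epi S.g →
        (S.map H).Exact ∧ Epi (H.map S.g) :=
      ((Functor.preservesFiniteColimits_tfae H).out 3 1).1 hHrex
    have hmap := hrex2 (ShortComplex.mk d₂ g hzero) ⟨h₂, hgepi⟩
    -- π.map ι is an isomorphism
    have hπι : IsIso (π.map ι) := by
      have hp0 : π.map p = 0 := hs.eq_of_tgt _ _
      have hmono : Mono (π.map ι) := by
        have : Mono ι := inferInstance
        exact π.map_mono ι
      have hπrex : ∀ (S : ShortComplex A), S.Exact ∧ Epi S.g →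
          (S.map π).Exact ∧ Epi (π.map S.g) :=
        ((Functor.preservesFiniteColimits_tfae π).out 3 1).1 (inferInstance : PreservesFiniteColimits π)
      have hexact := hπrex (ShortComplex.mk ι p (kernel.condition p))
        ⟨ShortComplex.exact_kernel p, inferInstance⟩
      have hepi : Epi (π.map ι) := hexact.1.epi_f hp0
      exact isIso_of_mono_of_epi _
    -- hence H.map ι is an isomorphism
    have hHι : IsIso (H.map ι) := by
      have hnat := e.hom.naturality ι
      have : H.map ι = e.inv.app (kernel p) ≫ (π ⋙ G).map ι ≫ e.hom.app (P.complex.X 0) := by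
        rw [hnat, ← Category.assoc, Iso.inv_hom_id_app, Category.id_comp]
      rw [this]
      have : IsIso ((π ⋙ G).map ι) := by
        show IsIso (G.map (π.map ι))
        infer_instance
      infer_instance
    -- conclude exactness of the mapped complex at 1
    refine (@ShortComplex.exact_iff_of_epi_of_isIso_of_mono _ _ _
      (S₁ := (ShortComplex.mk d₂ g hzero).map H)
      (S₂ := ((H.mapHomologicalComplex (ComplexShape.down ℕ)).obj P.complex).sc' 2 1 0)
      { τ₁ := 𝟙 _, τ₂ := 𝟙 _, τ₃ := H.map ι,
        comm₁₂ := by simp [ShortComplex.map]; erw [Category.id_comp, Category.comp_id], comm₂₃ := by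
          simp only [ShortComplex.map]
          dsimp
          erw [Category.id_comp, ← H.map_comp, hgι]; rfl }
      (by exact (inferInstance : Epi (𝟙 (H.obj (P.complex.X 2)))))
      (by exact (inferInstance : IsIso (𝟙 (H.obj (P.complex.X 1)))))
      (by exact (inferInstance : Mono (H.map ι)))).1 hmap.1
  rw [HomologicalComplex.exactAt_iff_isZero_homology] at this
  exact this
end

section
/- Let k be a field and A an ℕ-graded k-algebra with grading A = ⊕_{n∈ℕ} A_n. Let x_1, …, x_s be homogeneous elements of A with deg(x_i) ≤ d for all i, and let J be a two-sided ideal of A which, as a left ideal, is generated by x_1, …, x_s (so J = A·x_1 + ⋯ + A·x_s). Then for every homogeneous element x ∈ J of degree m, every natural number ℓ, and every homogeneous element a ∈ A_n with m + n ≥ ℓ + d, the product x·a lies in the left A-submodule A_{≥ℓ}·x_1 + ⋯ + A_{≥ℓ}·x_s, i.e. x·a = a_1·x_1 + ⋯ + a_s·x_s with each a_i ∈ A_{≥ℓ}. -/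
universe u

/-- Let `A` be an `ℕ`-graded `k`-algebra, `x₁, …, x_s` homogeneous elements
of degrees `≤ d`, and `J` a two-sided ideal generated as a left ideal by the `xᵢ`. Then for
every homogeneous `x ∈ J` of degree `m`, every `ℓ`, and every homogeneous `a` of degree `n`
with `m + n ≥ ℓ + d`, one can write `x * a = ∑ i, cᵢ * xᵢ` with each `cᵢ ∈ A_{≥ℓ}`. -/
theorem stmt6 (k : Type u) [Field k] (A : Type u) [Ring A] [Algebra k A]
    (𝒜 : ℕ → Submodule k A) [GradedAlgebra 𝒜]
    (s : ℕ) (x : Fin s → A) (dg : Fin s → ℕ) (d : ℕ)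
    (hx : ∀ i, x i ∈ 𝒜 (dg i)) (hdg : ∀ i, dg i ≤ d)
    -- J is a two-sided ideal of A ...
    (J : Ideal A) (hJtwo : ∀ y ∈ J, ∀ a : A, y * a ∈ J)
    -- ... which, as a left ideal, is generated by x₁, …, x_s
    (hJ : J = Submodule.span A (Set.range x))
    (m ℓ n : ℕ) (y : A) (hyJ : y ∈ J) (hym : y ∈ 𝒜 m)
    (a : A) (ha : a ∈ 𝒜 n) (hdeg : ℓ + d ≤ m + n) :
    ∃ c : Fin s → A, (∀ i, c i ∈ ⨆ (j : ℕ) (_ : ℓ ≤ j), 𝒜 j) ∧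
      y * a = ∑ i, c i * x i := by
  have hya : y * a ∈ Submodule.span A (Set.range x) := hJ ▸ hJtwo y hyJ a
  obtain ⟨b, hb⟩ := (Submodule.mem_span_range_iff_exists_fun A).mp hya
  simp only [smul_eq_mul] at hb
  have hhom : y * a ∈ 𝒜 (m + n) := SetLike.mul_mem_graded hym ha
  refine ⟨fun i => if dg i ≤ m + n then
      (DirectSum.decompose 𝒜 (b i) (m + n - dg i) : A) else 0, ?_, ?_⟩
  · intro i
    dsimp only
    split_ifs with h
    · refine Submodule.mem_iSup_of_mem (m + n - dg i) ?_
      refine Submodule.mem_iSup_of_mem ?_ (SetLike.coe_mem _)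
      have := hdg i
      omega
    · exact Submodule.zero_mem _
  · have := congrArg (fun z => (DirectSum.decompose 𝒜 z (m + n) : A)) hb
    simp only at this
    rw [DirectSum.decompose_sum] at this
    rw [DirectSum.decompose_of_mem_same 𝒜 hhom] at this
    rw [← this]
    rw [DFinsupp.finset_sum_apply, AddSubmonoidClass.coe_finset_sum]
    refine Finset.sum_congr rfl fun i _ => ?_
    dsimp only
    split_ifs with h
    · rw [DirectSum.coe_decompose_mul_of_right_mem_of_le 𝒜 (hx i) h]
    · rw [DirectSum.coe_decompose_mul_of_right_mem_of_not_le 𝒜 (hx i) h, zero_mul]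
end

section
/- Let k be a field and A an ℕ-graded k-algebra with grading A = ⊕_{n∈ℕ} A_n such that dim_k(A_n) < ∞ for all n. Let J be a two-sided ideal of A which, as a left ideal, is generated by finitely many homogeneous elements. Let N be a graded right A-module and M a graded A-submodule of N such that M·J = 0 and such that the quotient module N/M lies in Fdim(A), i.e. every cyclic A-submodule of N/M is finite-dimensional over k. Then the submodule N·J of N lies in Fdim(A), i.e. every element of N·J generates a finite-dimensional A-submodule of N. -/
universe u

open MulOpposite

/-- Let `A` be an `ℕ`-graded `k`-algebra with finite-dimensional graded
components and `J` a two-sided ideal generated as a left ideal by finitely many homogeneous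
elements.  If `N` is a graded right `A`-module and `M ⊆ N` a graded submodule with `M·J = 0`
such that every cyclic submodule of `N/M` is finite-dimensional over `k`, then every element
of `N·J` generates a finite-dimensional submodule of `N`. -/
theorem stmt7 (k : Type u) [Field k] (A : Type u) [Ring A] [Algebra k A]
    (𝒜 : ℕ → Submodule k A) [GradedAlgebra 𝒜]
    -- dim_k(A_n) < ∞ for all n
    (hfin : ∀ n : ℕ, FiniteDimensional k (𝒜 n))
    -- J is a two-sided ideal of A ...
    (J : Ideal A) (hJtwo : ∀ y ∈ J, ∀ a : A, y * a ∈ J)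
    -- ... which, as a left ideal, is generated by finitely many homogeneous elements
    (hJgen : ∃ (s : ℕ) (x : Fin s → A) (dg : Fin s → ℕ),
      (∀ i, x i ∈ 𝒜 (dg i)) ∧ J = Submodule.span A (Set.range x))
    -- N is a graded right A-module (a module over Aᵐᵒᵖ, graded compatibly)
    (N : Type u) [AddCommGroup N] [Module k N] [Module Aᵐᵒᵖ N] [IsScalarTower k Aᵐᵒᵖ N]
    (𝒩 : ℤ → Submodule k N) [DirectSum.Decomposition 𝒩]
    (hcompat : ∀ (m : ℤ) (n : ℕ) (u : N) (a : A),
      u ∈ 𝒩 m → a ∈ 𝒜 n → op a • u ∈ 𝒩 (m + n))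
    -- M is a graded A-submodule of N
    (M : Submodule Aᵐᵒᵖ N)
    (hMgr : ∀ u ∈ M, ∀ m : ℤ, (DirectSum.decompose 𝒩 u m : N) ∈ M)
    -- M·J = 0
    (hMJ : ∀ u ∈ M, ∀ a ∈ J, op a • u = 0)
    -- every cyclic A-submodule of N/M is finite-dimensional over k
    (hquot : ∀ t : N ⧸ M,
      FiniteDimensional k ((Submodule.span Aᵐᵒᵖ {t}).restrictScalars k)) :
    -- every element of N·J generates a finite-dimensional A-submodule of N
    ∀ v ∈ Submodule.span Aᵐᵒᵖ {w : N | ∃ (u : N) (a : A), a ∈ J ∧ w = op a • u},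
      FiniteDimensional k ((Submodule.span Aᵐᵒᵖ {v}).restrictScalars k) := by
  obtain ⟨s, x, dg, hxhom, hJ⟩ := hJgen
  have hxJ : ∀ i, x i ∈ J := by
    intro i; rw [hJ]; exact Submodule.subset_span (Set.mem_range_self i)
  -- the k-linear map given by right multiplication by `x i`
  let g : Fin s → N →ₗ[k] N := fun i =>
    { toFun := fun w => op (x i) • w
      map_add' := fun w₁ w₂ => smul_add _ _ _
      map_smul' := fun c w => (smul_comm (op (x i)) c w) }
  -- Key claim: for each u there is a fixed finite-dimensional k-subspace containing u·J
  have key : ∀ u : N, ∃ W : Submodule k N, FiniteDimensional k W ∧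
      ∀ c ∈ J, op c • u ∈ W := by
    intro u
    set t : N ⧸ M := Submodule.Quotient.mk u with ht
    haveI := hquot t
    obtain ⟨S, hS⟩ := (Submodule.fg_iff_finiteDimensional _).2 (hquot t)
    -- lifts of elements of S
    have hlift : ∀ q : N ⧸ M, ∃ n : N, Submodule.Quotient.mk n = q :=
      Submodule.Quotient.mk_surjective M
    choose lift hliftspec using hlift
    set V : Submodule k N := Submodule.span k (lift '' (S : Set (N ⧸ M))) with hV
    have hVfd : FiniteDimensional k V :=
      FiniteDimensional.span_of_finite _ (S.finite_toSet.image _)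
    -- u·A ⊆ V + M
    have hmem : ∀ r : A, op r • u ∈ V ⊔ M.restrictScalars k := by
      intro r
      set f : N →ₗ[k] N ⧸ M := M.mkQ.restrictScalars k with hf
      have h1 : f (op r • u) ∈ Submodule.span k (S : Set (N ⧸ M)) := by
        rw [hS]
        show M.mkQ (op r • u) ∈ (Submodule.span Aᵐᵒᵖ {t}).restrictScalars k
        simp only [Submodule.mkQ_apply, Submodule.restrictScalars_mem]
        rw [show (Submodule.Quotient.mk (op r • u) : N ⧸ M) = op r • t from rfl]
        exact Submodule.smul_mem _ _ (Submodule.mem_span_singleton_self t)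
      have h2 : Submodule.span k (S : Set (N ⧸ M)) ≤ Submodule.map f V := by
        rw [Submodule.span_le]
        intro q hq
        exact ⟨lift q, Submodule.subset_span ⟨q, hq, rfl⟩, hliftspec q⟩
      have h3 : op r • u ∈ Submodule.comap f (Submodule.map f V) := h2 h1
      rw [Submodule.comap_map_eq] at h3
      have hker : LinearMap.ker f = M.restrictScalars k := by
        rw [hf, LinearMap.ker_restrictScalars, Submodule.ker_mkQ]
      rwa [hker] at h3
    refine ⟨⨆ i, V.map (g i), inferInstance, ?_⟩
    intro c hc
    rw [hJ, Submodule.mem_span_range_iff_exists_fun] at hc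
    obtain ⟨r, hr⟩ := hc
    have : op c • u = ∑ i, op (x i) • (op (r i) • u) := by
      have h1 : ∀ i, op (x i) • op (r i) • u = op (r i • x i) • u := fun i => by
        rw [← mul_smul, smul_eq_mul, op_mul]
      simp_rw [h1]
      rw [← Finset.sum_smul, ← hr]
      congr 1
      exact map_sum (opAddEquiv : A ≃+ Aᵐᵒᵖ) _ Finset.univ
    rw [this]
    refine Submodule.sum_mem _ fun i _ => ?_
    obtain ⟨w, hw, m, hm, hwm⟩ := Submodule.mem_sup.1 (hmem (r i))
    have hmz : op (x i) • m = 0 := hMJ m hm (x i) (hxJ i)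
    have : op (x i) • (op (r i) • u) = op (x i) • w := by
      rw [← hwm, smul_add, hmz, add_zero]
    rw [this]
    exact Submodule.mem_iSup_of_mem i ⟨w, hw, rfl⟩
  -- Now span induction
  intro v hv
  have main : ∃ W : Submodule k N, FiniteDimensional k W ∧ ∀ b : A, op b • v ∈ W := by
    induction hv using Submodule.span_induction with
    | mem w hw =>
      obtain ⟨u, a, haJ, rfl⟩ := hw
      obtain ⟨W, hWfd, hW⟩ := key u
      refine ⟨W, hWfd, fun b => ?_⟩
      rw [← mul_smul, ← op_mul]
      exact hW _ (hJtwo a haJ b)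
    | zero => exact ⟨⊥, inferInstance, fun b => by simp⟩
    | add v₁ v₂ _ _ h₁ h₂ =>
      obtain ⟨W₁, hfd₁, hW₁⟩ := h₁
      obtain ⟨W₂, hfd₂, hW₂⟩ := h₂
      refine ⟨W₁ ⊔ W₂, inferInstance, fun b => ?_⟩
      rw [smul_add]
      exact Submodule.add_mem_sup (hW₁ b) (hW₂ b)
    | smul c v' _ h =>
      obtain ⟨W, hfd, hW⟩ := h
      refine ⟨W, hfd, fun b => ?_⟩
      rw [← mul_smul]
      have : op b * c = op (unop c * b) := by rw [op_mul, op_unop]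
      rw [this]
      exact hW _
  obtain ⟨W, hWfd, hW⟩ := main
  have hle : (Submodule.span Aᵐᵒᵖ {v}).restrictScalars k ≤ W := by
    intro y hy
    rw [Submodule.restrictScalars_mem, Submodule.mem_span_singleton] at hy
    obtain ⟨r, rfl⟩ := hy
    have : r • v = op (unop r) • v := by rw [op_unop]
    rw [this]
    exact hW _
  exact Submodule.finiteDimensional_of_le hle
end

section
/- Let k be a field and A an ℕ-graded k-algebra with grading A = ⊕_{n∈ℕ} A_n such that dim_k(A_n) < ∞ for all n. Let J be a two-sided ideal of A which, as a left ideal, is generated by finitely many homogeneous elements. Let N be a graded right A-module and M a graded A-submodule of N such that: (i) M·J = 0; (ii) every cyclic A-submodule of N/M is finite-dimensional over k; (iii) M is an essential submodule of N, i.e. every A-submodule P of N with P ∩ M = 0 is zero; and (iv) the only A-submodule of N that is finite-dimensional over k is the zero submodule. Then N·J = 0. -/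
universe u

open MulOpposite

/-- Let `A` be an `ℕ`-graded `k`-algebra with finite-dimensional graded
components and `J` a two-sided ideal generated as a left ideal by finitely many homogeneous
elements.  Let `N` be a graded right `A`-module and `M ⊆ N` a graded submodule such that
(i) `M·J = 0`; (ii) every cyclic submodule of `N/M` is finite-dimensional over `k`;
(iii) `M` is essential in `N`; (iv) the only finite-dimensional submodule of `N` is `0`.
Then `N·J = 0`. -/
theorem stmt8 (k : Type u) [Field k] (A : Type u) [Ring A] [Algebra k A]
    (𝒜 : ℕ → Submodule k A) [GradedAlgebra 𝒜]
    -- dim_k(A_n) < ∞ for all n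
    (hfin : ∀ n : ℕ, FiniteDimensional k (𝒜 n))
    -- J is a two-sided ideal of A ...
    (J : Ideal A) (hJtwo : ∀ y ∈ J, ∀ a : A, y * a ∈ J)
    -- ... which, as a left ideal, is generated by finitely many homogeneous elements
    (hJgen : ∃ (s : ℕ) (x : Fin s → A) (dg : Fin s → ℕ),
      (∀ i, x i ∈ 𝒜 (dg i)) ∧ J = Submodule.span A (Set.range x))
    -- N is a graded right A-module (a module over Aᵐᵒᵖ, graded compatibly)
    (N : Type u) [AddCommGroup N] [Module k N] [Module Aᵐᵒᵖ N] [IsScalarTower k Aᵐᵒᵖ N]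
    (𝒩 : ℤ → Submodule k N) [DirectSum.Decomposition 𝒩]
    (hcompat : ∀ (m : ℤ) (n : ℕ) (u : N) (a : A),
      u ∈ 𝒩 m → a ∈ 𝒜 n → op a • u ∈ 𝒩 (m + n))
    -- M is a graded A-submodule of N
    (M : Submodule Aᵐᵒᵖ N)
    (hMgr : ∀ u ∈ M, ∀ m : ℤ, (DirectSum.decompose 𝒩 u m : N) ∈ M)
    -- (i) M·J = 0
    (hMJ : ∀ u ∈ M, ∀ a ∈ J, op a • u = 0)
    -- (ii) every cyclic A-submodule of N/M is finite-dimensional over k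
    (hquot : ∀ t : N ⧸ M,
      FiniteDimensional k ((Submodule.span Aᵐᵒᵖ {t}).restrictScalars k))
    -- (iii) M is an essential submodule of N
    (hess : ∀ P : Submodule Aᵐᵒᵖ N, P ⊓ M = ⊥ → P = ⊥)
    -- (iv) the only A-submodule of N that is finite-dimensional over k is the zero submodule
    (hnofd : ∀ P : Submodule Aᵐᵒᵖ N,
      FiniteDimensional k (P.restrictScalars k) → P = ⊥) :
    -- N·J = 0
    ∀ (u : N), ∀ a ∈ J, op a • u = 0 := by
  intro u a ha
  classical
  obtain ⟨s, x, dg, hx, hJeq⟩ := hJgen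
  have hxJ : ∀ i, x i ∈ J := fun i => hJeq ▸ Submodule.subset_span ⟨i, rfl⟩
  -- scalars commute
  have hcomm : ∀ (c : k) (b : Aᵐᵒᵖ) (v : N), b • (c • v) = c • (b • v) := by
    intro c b v
    rw [← IsScalarTower.algebraMap_smul Aᵐᵒᵖ c v, ← mul_smul, ← Algebra.commutes c b,
      mul_smul, IsScalarTower.algebraMap_smul]
  -- the submodule u·J
  let Q : Submodule Aᵐᵒᵖ N :=
    { carrier := (fun y : A => op y • u) '' (J : Set A)
      add_mem' := by
        rintro _ _ ⟨y, hy, rfl⟩ ⟨z, hz, rfl⟩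
        exact ⟨y + z, J.add_mem hy hz, by simp [op_add, add_smul]⟩
      zero_mem' := ⟨0, J.zero_mem, by simp⟩
      smul_mem' := by
        rintro b _ ⟨y, hy, rfl⟩
        refine ⟨y * b.unop, hJtwo y hy b.unop, ?_⟩
        show op (y * b.unop) • u = b • op y • u
        rw [op_mul, mul_smul, op_unop] }
  have hmemQ : op a • u ∈ Q := ⟨a, ha, rfl⟩
  -- the finite-dimensional cyclic submodule of N/M
  set t : N ⧸ M := Submodule.Quotient.mk u with ht
  have hT : FiniteDimensional k ((Submodule.span Aᵐᵒᵖ {t}).restrictScalars k) := hquot t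
  have hfg : ((Submodule.span Aᵐᵒᵖ {t}).restrictScalars k).FG := Module.Finite.iff_fg.mp hT
  obtain ⟨S, hS⟩ := hfg
  -- lift S to N
  have hsurj : Function.Surjective (Submodule.Quotient.mk (p := M)) :=
    Submodule.Quotient.mk_surjective M
  set ℓ : N ⧸ M → N := Function.surjInv hsurj with hℓdef
  have hℓ : ∀ v : N ⧸ M, Submodule.Quotient.mk (ℓ v) = v :=
    fun v => Function.surjInv_eq hsurj v
  -- k-linear maps
  let f : Fin s → N →ₗ[k] N := fun i =>
    { toFun := fun v => op (x i) • v
      map_add' := fun v w => smul_add _ v w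
      map_smul' := fun c v => hcomm c _ v }
  let g : N →ₗ[k] N ⧸ M :=
    { toFun := Submodule.Quotient.mk
      map_add' := fun v w => rfl
      map_smul' := fun c v => rfl }
  -- the finite-dimensional k-subspace W
  set W : Submodule k N := Submodule.span k (⋃ i : Fin s, (f i) '' (ℓ '' (S : Set (N ⧸ M))))
    with hWdef
  have hWfin : FiniteDimensional k W := by
    apply FiniteDimensional.span_of_finite
    apply Set.finite_iUnion
    intro i
    exact ((S.finite_toSet.image ℓ).image _)
  -- key: if mk w ∈ span Aᵐᵒᵖ {t} then op (x i) • w ∈ W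
  have key : ∀ (w : N), Submodule.Quotient.mk w ∈ Submodule.span Aᵐᵒᵖ {t} →
      ∀ i : Fin s, op (x i) • w ∈ W := by
    intro w hw i
    have hw' : g w ∈ Submodule.map g (Submodule.span k (ℓ '' (S : Set (N ⧸ M)))) := by
      rw [Submodule.map_span]
      have himg : g '' (ℓ '' (S : Set (N ⧸ M))) = (S : Set (N ⧸ M)) := by
        rw [Set.image_image]
        exact (Set.image_congr (fun v _ => hℓ v)).trans (Set.image_id _)
      rw [himg, hS]
      exact hw
    obtain ⟨w', hw'mem, hww'⟩ := hw'
    have hdiff : w - w' ∈ M := by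
      rw [← Submodule.Quotient.eq M]
      exact (hww'.symm : g w = g w')
    have hzero : op (x i) • (w - w') = 0 := hMJ _ hdiff _ (hxJ i)
    have hsplit : op (x i) • w = op (x i) • w' :=
      sub_eq_zero.mp (by rw [← smul_sub, hzero])
    rw [hsplit]
    have : (f i) w' ∈ Submodule.map (f i) (Submodule.span k (ℓ '' (S : Set (N ⧸ M)))) :=
      Submodule.mem_map_of_mem hw'mem
    rw [Submodule.map_span] at this
    exact Submodule.span_mono (Set.subset_iUnion (fun j : Fin s => (f j) '' (ℓ '' (S : Set (N ⧸ M)))) i) this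
  -- Q ≤ W
  have hQW : ∀ q ∈ Q, q ∈ W := by
    rintro _ ⟨y, hy, rfl⟩
    rw [hJeq] at hy
    obtain ⟨c, hc⟩ := (Submodule.mem_span_range_iff_exists_fun (R := A)).mp hy
    rw [← hc]
    show op (∑ i, c i • x i) • u ∈ W
    have : op (∑ i, c i • x i) • u = ∑ i, op (x i) • (op (c i) • u) := by
      have h1 : op (∑ i, c i • x i) = ∑ i, op (x i) * op (c i) := by
        rw [← opAddEquiv_apply, map_sum]
        exact Finset.sum_congr rfl fun i _ => by rw [opAddEquiv_apply, smul_eq_mul, op_mul]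
      rw [h1, Finset.sum_smul]
      exact Finset.sum_congr rfl fun i _ => mul_smul _ _ _
    rw [this]
    apply Submodule.sum_mem
    intro i _
    apply key
    have : Submodule.Quotient.mk (op (c i) • u) = op (c i) • t := rfl
    rw [this]
    exact Submodule.smul_mem _ _ (Submodule.mem_span_singleton_self t)
  have hQfin : FiniteDimensional k (Q.restrictScalars k) := by
    have hle : Q.restrictScalars k ≤ W := fun q hq => hQW q hq
    exact Submodule.finiteDimensional_of_le hle
  have hQbot : Q = ⊥ := hnofd Q hQfin
  have := hQbot ▸ hmemQ
  simpa using this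
end

section
/- Let 𝒞 and 𝒞' be Grothendieck abelian categories, let π : 𝒞 → 𝒬 and π' : 𝒞' → 𝒬' be Gabriel localizations with fully faithful right adjoints ω and ω', and let F : 𝒞' → 𝒞 be an exact, fully faithful functor such that π(F(x)) ≅ 0 for every object x of 𝒞' with π'(x) ≅ 0. Then any functor G : 𝒬' → 𝒬 with G∘π' ≅ π∘F is naturally isomorphic to π∘F∘ω'; in particular the induced functor i_* satisfies i_* ≅ π∘F∘ω'. -/
open CategoryTheory CategoryTheory.Limits

universe v u

/-- Any functor `G : 𝒬' ⥤ 𝒬` with `G ∘ π' ≅ π ∘ F` is naturally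
isomorphic to `π ∘ F ∘ ω'`. -/
theorem stmt10
    -- 𝒞 is a Grothendieck abelian category
    (C : Type u) [Category.{v} C] [Abelian C] [HasColimits C] [AB5 C] [HasSeparator C]
    -- 𝒬 is a Grothendieck abelian category
    (Q : Type u) [Category.{v} Q] [Abelian Q] [HasColimits Q] [AB5 Q] [HasSeparator Q]
    -- 𝒞' is a Grothendieck abelian category
    (C' : Type u) [Category.{v} C'] [Abelian C'] [HasColimits C'] [AB5 C'] [HasSeparator C']
    -- 𝒬' is a Grothendieck abelian category
    (Q' : Type u) [Category.{v} Q'] [Abelian Q'] [HasColimits Q'] [AB5 Q'] [HasSeparator Q']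
    -- π : 𝒞 ⥤ 𝒬 is a Gabriel localization: exact with fully faithful right adjoint ω
    (π : C ⥤ Q) [π.Additive] [PreservesFiniteLimits π] [PreservesFiniteColimits π]
    (ω : Q ⥤ C) [ω.Full] [ω.Faithful] (adj : π ⊣ ω)
    -- π' : 𝒞' ⥤ 𝒬' is a Gabriel localization: exact with fully faithful right adjoint ω'
    (π' : C' ⥤ Q') [π'.Additive] [PreservesFiniteLimits π'] [PreservesFiniteColimits π']
    (ω' : Q' ⥤ C') [ω'.Full] [ω'.Faithful] (adj' : π' ⊣ ω')
    -- F : 𝒞' ⥤ 𝒞 is exact and fully faithful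
    (F : C' ⥤ C) [F.Additive] [PreservesFiniteLimits F] [PreservesFiniteColimits F]
    [F.Full] [F.Faithful]
    -- π ∘ F vanishes on the kernel of π'
    (hker : ∀ x : C', IsZero (π'.obj x) → IsZero (π.obj (F.obj x)))
    :
    ∀ G : Q' ⥤ Q, Nonempty (π' ⋙ G ≅ F ⋙ π) → Nonempty (G ≅ ω' ⋙ F ⋙ π) := by
  intro G ⟨e⟩
  exact ⟨G.leftUnitor.symm ≪≫ Functor.isoWhiskerRight (asIso adj'.counit).symm G ≪≫
    Functor.associator _ _ _ ≪≫ Functor.isoWhiskerLeft ω' e⟩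
end

section
/- Let 𝒞 and 𝒞' be Grothendieck abelian categories, let π : 𝒞 → 𝒬 and π' : 𝒞' → 𝒬' be Gabriel localizations with fully faithful right adjoints ω and ω', and let F : 𝒞' → 𝒞 be an exact, fully faithful functor such that π(F(x)) ≅ 0 for every object x of 𝒞' with π'(x) ≅ 0. Assume: (ii) there is a natural isomorphism ω∘π∘F ≅ F∘ω'∘π' of functors 𝒞' → 𝒞; and (iii) the essential image of F is closed under subobjects and quotient objects in 𝒞. Then the essential image of i_* := π∘F∘ω' : 𝒬' → 𝒬 is closed under subobjects and quotient objects in 𝒬: for every object M of 𝒬' and every short exact sequence 0 → L → i_*(M) → N → 0 in 𝒬, both L and N are isomorphic to objects in the essential image of i_*. -/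
open CategoryTheory CategoryTheory.Limits

universe v u

/-- If moreover `ω ∘ π ∘ F ≅ F ∘ ω' ∘ π'` and the essential image of `F` is
closed under subobjects and quotients, then the essential image of `i_* := π ∘ F ∘ ω'` is
closed under subobjects and quotients: for every short exact sequence
`0 → L → i_* M → N → 0` in `𝒬`, both `L` and `N` lie in the essential image of `i_*`. -/
theorem stmt12
    -- 𝒞 is a Grothendieck abelian category
    (C : Type u) [Category.{v} C] [Abelian C] [HasColimits C] [AB5 C] [HasSeparator C]
    -- 𝒬 is a Grothendieck abelian category
    (Q : Type u) [Category.{v} Q] [Abelian Q] [HasColimits Q] [AB5 Q] [HasSeparator Q]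
    -- 𝒞' is a Grothendieck abelian category
    (C' : Type u) [Category.{v} C'] [Abelian C'] [HasColimits C'] [AB5 C'] [HasSeparator C']
    -- 𝒬' is a Grothendieck abelian category
    (Q' : Type u) [Category.{v} Q'] [Abelian Q'] [HasColimits Q'] [AB5 Q'] [HasSeparator Q']
    -- π : 𝒞 ⥤ 𝒬 is a Gabriel localization: exact with fully faithful right adjoint ω
    (π : C ⥤ Q) [π.Additive] [PreservesFiniteLimits π] [PreservesFiniteColimits π]
    (ω : Q ⥤ C) [ω.Full] [ω.Faithful] (adj : π ⊣ ω)
    -- π' : 𝒞' ⥤ 𝒬' is a Gabriel localization: exact with fully faithful right adjoint ω'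
    (π' : C' ⥤ Q') [π'.Additive] [PreservesFiniteLimits π'] [PreservesFiniteColimits π']
    (ω' : Q' ⥤ C') [ω'.Full] [ω'.Faithful] (adj' : π' ⊣ ω')
    -- F : 𝒞' ⥤ 𝒞 is exact and fully faithful
    (F : C' ⥤ C) [F.Additive] [PreservesFiniteLimits F] [PreservesFiniteColimits F]
    [F.Full] [F.Faithful]
    -- π ∘ F vanishes on the kernel of π'
    (hker : ∀ x : C', IsZero (π'.obj x) → IsZero (π.obj (F.obj x)))
    -- (ii) ω ∘ π ∘ F ≅ F ∘ ω' ∘ π' as functors 𝒞' ⥤ 𝒞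
    (hsat : Nonempty (F ⋙ π ⋙ ω ≅ π' ⋙ ω' ⋙ F))
    -- (iii) the essential image of F is closed under subobjects and quotient objects
    (hsub : ∀ (x : C') (L : C) (f : L ⟶ F.obj x), Mono f → F.essImage L)
    (hquot : ∀ (x : C') (N : C) (g : F.obj x ⟶ N), Epi g → F.essImage N) :
    ∀ (M : Q') (L N : Q) (f : L ⟶ (ω' ⋙ F ⋙ π).obj M) (g : (ω' ⋙ F ⋙ π).obj M ⟶ N)
      (w : f ≫ g = 0), (ShortComplex.mk f g w).ShortExact →
        (ω' ⋙ F ⋙ π).essImage L ∧ (ω' ⋙ F ⋙ π).essImage N := by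
  obtain ⟨σ⟩ := hsat
  intro M L N f g w hse
  haveI : PreservesLimitsOfSize.{0, 0} ω := adj.rightAdjoint_preservesLimits
  -- key: π(F(unit)) is an isomorphism
  have key : ∀ x : C', IsIso (π.map (F.map (adj'.unit.app x))) := by
    intro x
    haveI : IsIso (π'.map (adj'.unit.app x) ≫ adj'.counit.app (π'.obj x)) := by
      rw [adj'.left_triangle_components x]; exact IsIso.id _
    haveI : IsIso (π'.map (adj'.unit.app x)) :=
      IsIso.of_isIso_comp_right _ (adj'.counit.app (π'.obj x))
    have hK : IsZero (π'.obj (kernel (adj'.unit.app x))) :=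
      (isZero_zero Q').of_iso ((PreservesKernel.iso π' _) ≪≫ kernel.ofMono (π'.map _))
    have hCk : IsZero (π'.obj (cokernel (adj'.unit.app x))) :=
      (isZero_zero Q').of_iso ((PreservesCokernel.iso π' _) ≪≫ cokernel.ofEpi (π'.map _))
    haveI : Mono (π.map (F.map (adj'.unit.app x))) := by
      apply Preadditive.mono_of_kernel_iso_zero
      exact (PreservesKernel.iso π (F.map _)).symm ≪≫
        π.mapIso (PreservesKernel.iso F _).symm ≪≫ (hker _ hK).isoZero
    haveI : Epi (π.map (F.map (adj'.unit.app x))) := by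
      apply Preadditive.epi_of_cokernel_iso_zero
      exact (PreservesCokernel.iso π (F.map _)).symm ≪≫
        π.mapIso (PreservesCokernel.iso F _).symm ≪≫ (hker _ hCk).isoZero
    exact isIso_of_mono_of_epi _
  have mem : ∀ (x : C') (Z : Q), (π.obj (F.obj x) ≅ Z) → (ω' ⋙ F ⋙ π).essImage Z := by
    intro x Z e
    haveI := key x
    exact ⟨π'.obj x, ⟨(asIso (π.map (F.map (adj'.unit.app x)))).symm ≪≫ e⟩⟩
  -- the comparison iso ω(i_* M) ≅ F(ω' M)
  let j : ω.obj ((ω' ⋙ F ⋙ π).obj M) ≅ F.obj (ω'.obj M) :=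
    σ.app (ω'.obj M) ≪≫ F.mapIso (ω'.mapIso (asIso (adj'.counit.app M)))
  haveI := hse.mono_f
  haveI := hse.epi_g
  haveI : Mono (ω.map f) := preserves_mono_of_preservesLimit ω f
  constructor
  · -- L
    have hm : Mono (ω.map f ≫ j.hom) := mono_comp _ _
    obtain ⟨x, ⟨e⟩⟩ := hsub (ω'.obj M) (ω.obj L) (ω.map f ≫ j.hom) hm
    exact mem x L (π.mapIso e ≪≫ asIso (adj.counit.app L))
  · -- N
    have he : Epi (j.inv ≫ cokernel.π (ω.map f)) := epi_comp _ _
    obtain ⟨y, ⟨e'⟩⟩ := hquot (ω'.obj M) (cokernel (ω.map f)) (j.inv ≫ cokernel.π (ω.map f)) he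
    have comm : π.map (ω.map f) ≫ adj.counit.app ((ω' ⋙ F ⋙ π).obj M) =
        (adj.counit.app L) ≫ f := by simp only [Functor.comp_map] at *; exact adj.counit.naturality f
    let i1 : cokernel (π.map (ω.map f)) ≅ cokernel f :=
      cokernel.mapIso _ f (asIso (adj.counit.app L))
        (asIso (adj.counit.app ((ω' ⋙ F ⋙ π).obj M))) comm
    let i2 : π.obj (cokernel (ω.map f)) ≅ N :=
      PreservesCokernel.iso π (ω.map f) ≪≫ i1 ≪≫
        (cokernelIsCokernel f).coconePointUniqueUpToIso hse.gIsCokernel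
    exact mem y N (π.mapIso e' ≪≫ i2)
end

section
/- Let 𝒞 and 𝒞' be Grothendieck abelian categories, let π : 𝒞 → 𝒬 and π' : 𝒞' → 𝒬' be Gabriel localizations with fully faithful right adjoints ω and ω', and let F : 𝒞' → 𝒞 be an exact, fully faithful functor such that π(F(x)) ≅ 0 for every object x of 𝒞' with π'(x) ≅ 0. If F has a right adjoint H : 𝒞 → 𝒞', then the functor i_* := π∘F∘ω' : 𝒬' → 𝒬 has a right adjoint, namely i^! := π'∘H∘ω : 𝒬 → 𝒬'. -/
open CategoryTheory CategoryTheory.Limits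

universe v u

/-- Auxiliary: if `f ≫ g = 𝟙` and `g` is an isomorphism, then `f` is an isomorphism. -/
theorem stmt13_aux_isIso {D : Type*} [Category D] {X Y : D} (f : X ⟶ Y) (g : Y ⟶ X)
    [IsIso g] (w : f ≫ g = 𝟙 X) : IsIso f := by
  have hf : f = inv g := by
    rw [← Category.comp_id f, ← IsIso.hom_inv_id g, ← Category.assoc, w, Category.id_comp]
  rw [hf]
  infer_instance

/-- If `F ⊣ H` (i.e. `F` has a right adjoint `H`), then
`i_* := π ∘ F ∘ ω'` has right adjoint `i^! := π' ∘ H ∘ ω`. -/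
theorem stmt13
    -- 𝒞 is a Grothendieck abelian category
    (C : Type u) [Category.{v} C] [Abelian C] [HasColimits C] [AB5 C] [HasSeparator C]
    -- 𝒬 is a Grothendieck abelian category
    (Q : Type u) [Category.{v} Q] [Abelian Q] [HasColimits Q] [AB5 Q] [HasSeparator Q]
    -- 𝒞' is a Grothendieck abelian category
    (C' : Type u) [Category.{v} C'] [Abelian C'] [HasColimits C'] [AB5 C'] [HasSeparator C']
    -- 𝒬' is a Grothendieck abelian category
    (Q' : Type u) [Category.{v} Q'] [Abelian Q'] [HasColimits Q'] [AB5 Q'] [HasSeparator Q']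
    -- π : 𝒞 ⥤ 𝒬 is a Gabriel localization: exact with fully faithful right adjoint ω
    (π : C ⥤ Q) [π.Additive] [PreservesFiniteLimits π] [PreservesFiniteColimits π]
    (ω : Q ⥤ C) [ω.Full] [ω.Faithful] (adj : π ⊣ ω)
    -- π' : 𝒞' ⥤ 𝒬' is a Gabriel localization: exact with fully faithful right adjoint ω'
    (π' : C' ⥤ Q') [π'.Additive] [PreservesFiniteLimits π'] [PreservesFiniteColimits π']
    (ω' : Q' ⥤ C') [ω'.Full] [ω'.Faithful] (adj' : π' ⊣ ω')
    -- F : 𝒞' ⥤ 𝒞 is exact and fully faithful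
    (F : C' ⥤ C) [F.Additive] [PreservesFiniteLimits F] [PreservesFiniteColimits F]
    [F.Full] [F.Faithful]
    -- π ∘ F vanishes on the kernel of π'
    (hker : ∀ x : C', IsZero (π'.obj x) → IsZero (π.obj (F.obj x)))
    -- F has a right adjoint H
    (H : C ⥤ C') (adjFH : F ⊣ H) :
    Nonempty ((ω' ⋙ F ⋙ π) ⊣ (ω ⋙ H ⋙ π')) := by
  classical
  -- basic instances
  haveI : ω.IsRightAdjoint := ⟨π, ⟨adj⟩⟩
  haveI : ω'.IsRightAdjoint := ⟨π', ⟨adj'⟩⟩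
  haveI : H.IsRightAdjoint := ⟨F, ⟨adjFH⟩⟩
  haveI : IsIso adj.counit := adj.counit_isIso_of_R_fully_faithful
  haveI : IsIso adj'.counit := adj'.counit_isIso_of_R_fully_faithful
  haveI : PreservesFiniteLimits (F ⋙ π) := comp_preservesFiniteLimits F π
  haveI : PreservesFiniteColimits (F ⋙ π) := comp_preservesFiniteColimits F π
  -- the unit of adj' is inverted by π'
  have hπ'unit : ∀ x : C', IsIso (π'.map (adj'.unit.app x)) := fun x =>
    stmt13_aux_isIso _ (adj'.counit.app (π'.obj x)) (adj'.left_triangle_components x)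
  -- step: the unit of adj' is an isomorphism at `H.obj (ω.obj y)` for every `y`
  have key : ∀ y : Q, IsIso (adj'.unit.app (H.obj (ω.obj y))) := by
    intro y
    set c : C' := H.obj (ω.obj y) with hc
    set η : c ⟶ ω'.obj (π'.obj c) := adj'.unit.app c with hη
    haveI : IsIso (π'.map η) := hπ'unit c
    -- kernel and cokernel of η are π'-torsion
    have hKzero : IsZero (π'.obj (kernel η)) := by
      refine IsZero.of_iso ?_ (PreservesKernel.iso π' η)
      exact IsZero.of_iso (isZero_zero _) (kernel.ofMono (π'.map η))
    have hCokzero : IsZero (π'.obj (cokernel η)) := by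
      refine IsZero.of_iso ?_ (PreservesCokernel.iso π' η)
      exact IsZero.of_iso (isZero_zero _) (cokernel.ofEpi (π'.map η))
    -- Mono η : the kernel inclusion is zero
    have hmono : Mono η := by
      apply Preadditive.mono_of_kernel_zero
      have h1 : ((adjFH.homEquiv (kernel η) (ω.obj y)).symm (kernel.ι η)) = 0 := by
        set t := (adjFH.homEquiv (kernel η) (ω.obj y)).symm (kernel.ι η) with ht
        have h2 : ((adj.homEquiv (F.obj (kernel η)) y).symm t) = 0 :=
          (hker _ hKzero).eq_zero_of_src _
        have h3 := congrArg (adj.homEquiv (F.obj (kernel η)) y) h2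
        rw [Equiv.apply_symm_apply] at h3
        rw [h3, Adjunction.homEquiv_unit, Functor.map_zero, comp_zero]
      have h4 := congrArg (adjFH.homEquiv (kernel η) (ω.obj y)) h1
      rw [Equiv.apply_symm_apply] at h4
      rw [h4, Adjunction.homEquiv_unit, Functor.map_zero, comp_zero]
    -- π (F (η)) is an isomorphism
    haveI hFη : IsIso (π.map (F.map η)) := by
      have hm : Mono (π.map (F.map η)) := by
        apply Preadditive.mono_of_isZero_kernel
        refine IsZero.of_iso ?_ (PreservesKernel.iso (F ⋙ π) η).symm
        exact hker _ hKzero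
      have he : Epi (π.map (F.map η)) := by
        apply Preadditive.epi_of_isZero_cokernel
        refine IsZero.of_iso ?_ (PreservesCokernel.iso (F ⋙ π) η).symm
        exact hker _ hCokzero
      exact isIso_of_mono_of_epi _
    -- form the pushout of F η along the counit of adjFH at ω y
    set εy : F.obj c ⟶ ω.obj y := adjFH.counit.app (ω.obj y) with hεy
    set P : C := pushout εy (F.map η) with hP
    set inl : ω.obj y ⟶ P := pushout.inl εy (F.map η) with hinl
    set inr : F.obj (ω'.obj (π'.obj c)) ⟶ P := pushout.inr εy (F.map η) with hinr
    -- π inverts inl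
    haveI hinliso : IsIso (π.map inl) := by
      haveI h5 : IsIso (pushout.inl (π.map εy) (π.map (F.map η))) :=
        pushout_inl_iso_of_right_iso (π.map εy) (π.map (F.map η))
      have h6 : IsIso (pushout.inl (π.map εy) (π.map (F.map η)) ≫
          (PreservesPushout.iso π εy (F.map η)).hom) := inferInstance
      have h7 := PreservesPushout.inl_iso_hom π εy (F.map η)
      rw [h7] at h6
      exact h6
    -- the unit of adj is invertible at ω y
    haveI hunitωy : IsIso (adj.unit.app (ω.obj y)) :=
      stmt13_aux_isIso _ (ω.map (adj.counit.app y)) (adj.right_triangle_components y)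
    -- retraction of inl
    set r : P ⟶ ω.obj y :=
      adj.unit.app P ≫ inv (ω.map (π.map inl)) ≫ inv (adj.unit.app (ω.obj y)) with hr
    have hnat : inl ≫ adj.unit.app P = adj.unit.app (ω.obj y) ≫ ω.map (π.map inl) := by
      simpa using (adj.unit.naturality inl)
    have hinlr : inl ≫ r = 𝟙 (ω.obj y) := by
      rw [hr, ← Category.assoc, hnat, Category.assoc, IsIso.hom_inv_id_assoc,
        IsIso.hom_inv_id]
    -- retraction of η
    set ρ : ω'.obj (π'.obj c) ⟶ c := adjFH.homEquiv _ _ (inr ≫ r) with hρdef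
    have hρ : η ≫ ρ = 𝟙 c := by
      rw [hρdef, ← Adjunction.homEquiv_naturality_left]
      have hcond : F.map η ≫ inr = εy ≫ inl := pushout.condition.symm
      rw [← Category.assoc, hcond, Category.assoc, hinlr, Category.comp_id,
        Adjunction.homEquiv_unit]
      exact adjFH.right_triangle_components (ω.obj y)
    -- the cokernel of η is zero
    have hcokiszero : IsZero (cokernel η) := by
      have h0 : η ≫ (𝟙 (ω'.obj (π'.obj c)) - ρ ≫ η) = 0 := by
        rw [Preadditive.comp_sub, Category.comp_id, ← Category.assoc, hρ, Category.id_comp,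
          sub_self]
      set s : cokernel η ⟶ ω'.obj (π'.obj c) := cokernel.desc η _ h0 with hs
      have hsπ : s ≫ cokernel.π η = 𝟙 (cokernel η) := by
        rw [← cancel_epi (cokernel.π η), ← Category.assoc, hs, cokernel.π_desc,
          Preadditive.sub_comp, Category.id_comp, Category.assoc, cokernel.condition,
          comp_zero, sub_zero, Category.comp_id]
      have hs0 : s = 0 := by
        have h2 : ((adj'.homEquiv (cokernel η) (π'.obj c)).symm s) = 0 :=
          hCokzero.eq_zero_of_src _
        have h3 := congrArg (adj'.homEquiv (cokernel η) (π'.obj c)) h2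
        rw [Equiv.apply_symm_apply] at h3
        rw [h3, Adjunction.homEquiv_unit, Functor.map_zero, comp_zero]
      rw [IsZero.iff_id_eq_zero, ← hsπ, hs0, zero_comp]
    have hepi : Epi η := Preadditive.epi_of_isZero_cokernel _ hcokiszero
    exact isIso_of_mono_of_epi _
  -- assemble the adjunction by restricting (F ⋙ π) ⊣ (ω ⋙ H) along ω' and 𝟭 Q
  let big : (F ⋙ π) ⊣ (ω ⋙ H) := adjFH.comp adj
  let hiC : ω'.FullyFaithful := Functor.FullyFaithful.ofFullyFaithful ω'
  let hiD : (𝟭 Q).FullyFaithful := Functor.FullyFaithful.id Q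
  let comm1 : ω' ⋙ (F ⋙ π) ≅ (ω' ⋙ F ⋙ π) ⋙ 𝟭 Q := (Functor.rightUnitor _).symm
  let comm2 : 𝟭 Q ⋙ (ω ⋙ H) ≅ (ω ⋙ H ⋙ π') ⋙ ω' :=
    NatIso.ofComponents
      (fun y => @asIso _ _ _ _ (adj'.unit.app (H.obj (ω.obj y))) (key y))
      (fun {y y'} f => by
        simpa using (adj'.unit.naturality (H.map (ω.map f))))
  exact ⟨big.restrictFullyFaithful hiC hiD comm1 comm2⟩
end

section
/- Let 𝒞 and 𝒞' be Grothendieck abelian categories, let π : 𝒞 → 𝒬 and π' : 𝒞' → 𝒬' be Gabriel localizations with fully faithful right adjoints ω and ω', and let F : 𝒞' → 𝒞 be an exact, fully faithful functor such that π(F(x)) ≅ 0 for every object x of 𝒞' with π'(x) ≅ 0. Assume 𝒞 has enough projectives and that F has a left adjoint E : 𝒞 → 𝒞' (E is additive and right exact, being a left adjoint) satisfying: π'(E(s)) ≅ 0 for every object s of 𝒞 with π(s) ≅ 0, and the first left derived functor L₁(π'∘E) satisfies L₁(π'∘E)(s) ≅ 0 for every object s with π(s) ≅ 0. Then the functor i^*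 := π'∘E∘ω : 𝒬 → 𝒬' is left adjoint to i_* := π∘F∘ω' : 𝒬' → 𝒬. -/
open CategoryTheory CategoryTheory.Limits CategoryTheory.Projective

set_option linter.unusedSectionVars false
set_option maxHeartbeats 800000

namespace Stmt14Aux

noncomputable section

variable {C : Type*} [Category C] [Abelian C] [EnoughProjectives C]
variable {D : Type*} [Category D] [Abelian D]

section Res

variable {Z : C} (P : C) [Projective P] (ε : P ⟶ Z) [Epi ε]

def ofComplex' : ChainComplex C ℕ :=
  ChainComplex.mk' P (Projective.syzygies ε) (Projective.d ε)
    (fun f => ⟨_, Projective.d f,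
      (Category.assoc _ _ _).trans ((Projective.π (kernel f) ≫= kernel.condition f).trans comp_zero)⟩)

lemma ofComplex'_d_1_0 :
    (ofComplex' P ε).d 1 0 = d ε := by
  simp [ofComplex']

lemma ofComplex'_exactAt_succ (n : ℕ) :
    (ofComplex' P ε).ExactAt (n + 1) := by
  rw [HomologicalComplex.exactAt_iff' _ (n + 1 + 1) (n + 1) n (by simp) (by simp)]
  unfold ofComplex'
  have h := CategoryTheory.exact_d_f ((ChainComplex.mk' P (syzygies ε) (d ε)
    (fun f => ⟨_, Projective.d f,
      (Category.assoc _ _ _).trans ((Projective.π (kernel f) ≫= kernel.condition f).trans comp_zero)⟩)).d (n + 1) n)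
  refine ShortComplex.exact_of_iso ?_ h
  refine ShortComplex.isoMk (ChainComplex.mk'XIso P (syzygies ε) (d ε) (fun f => ⟨_, Projective.d f,
      (Category.assoc _ _ _).trans ((Projective.π (kernel f) ≫= kernel.condition f).trans comp_zero)⟩) n).symm
    (Iso.refl _) (Iso.refl _) ?_ ?_
  · dsimp [HomologicalComplex.sc', HomologicalComplex.shortComplexFunctor']
    rw [ChainComplex.mk'_d, Category.comp_id, Iso.inv_hom_id_assoc]
  · dsimp [HomologicalComplex.sc', HomologicalComplex.shortComplexFunctor']
    rw [Category.comp_id, Category.id_comp]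

instance ofComplex'_projective (n : ℕ) : Projective ((ofComplex' P ε).X n) := by
  obtain (_ | _ | _ | n) := n
  · exact (inferInstance : Projective P)
  all_goals apply Projective.projective_over

/-- The projective resolution of `Z` starting from a chosen epi `ε : P ⟶ Z`. -/
def of' : ProjectiveResolution Z where
  complex := ofComplex' P ε
  π := (ChainComplex.toSingle₀Equiv _ _).symm ⟨ε, by
          rw [ofComplex'_d_1_0]
          exact (Category.assoc _ _ _).trans
            ((Projective.π (kernel ε) ≫= kernel.condition ε).trans comp_zero)⟩
  quasiIso := ⟨fun n => by
    cases n
    · rw [ChainComplex.quasiIsoAt₀_iff, ShortComplex.quasiIso_iff_of_zeros']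
      · refine (ShortComplex.exact_and_epi_g_iff_of_iso ?_).2
          ⟨CategoryTheory.exact_d_f ε, by dsimp; infer_instance⟩
        exact ShortComplex.isoMk (Iso.refl _) (Iso.refl _) (Iso.refl _)
          (by simp [ofComplex']; erw [Category.id_comp, Category.comp_id])
          (by simp; erw [Category.id_comp, Category.comp_id]; simp [ChainComplex.toSingle₀Equiv]
              symm
              exact (HomologicalComplex.mkHomToSingle_f _ _).trans (Category.comp_id _))
      all_goals rfl
    · rw [quasiIsoAt_iff_exactAt']
      · apply ofComplex'_exactAt_succ
      · apply ChainComplex.exactAt_succ_single_obj⟩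

@[simp] lemma of'_π_f_zero : (of' P ε).π.f 0 = ε := by
  simp [of', ChainComplex.toSingle₀Equiv]
  exact (HomologicalComplex.mkHomToSingle_f _ _).trans (Category.comp_id _)


end Res

/-- If `L₁G(T) = 0` then `G` maps the inclusion of the first syzygy of a projective
resolution of `T` to a monomorphism. -/
lemma mono_G_map_kernelι
    (G : C ⥤ D) [G.Additive] [PreservesFiniteColimits G]
    {T : C} (R : ProjectiveResolution T)
    (hT1 : IsZero ((G.leftDerived 1).obj T)) :
    Mono (G.map (kernel.ι (R.π.f 0))) := by
  set ε : R.complex.X 0 ⟶ T := R.π.f 0 with hε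
  set i : kernel ε ⟶ R.complex.X 0 := kernel.ι ε with hi
  have hd10 : R.complex.d 1 0 ≫ ε = 0 := R.complex_d_comp_π_f_zero
  set q : R.complex.X 1 ⟶ kernel ε := kernel.lift ε (R.complex.d 1 0) hd10 with hq
  have hqi : q ≫ i = R.complex.d 1 0 := kernel.lift_ι _ _ _
  have hEpiq : Epi q := by
    rw [epi_iff_surjective_up_to_refinements]
    intro X x
    obtain ⟨X', π₀, h₀, x₁, fac⟩ := R.exact₀.exact_up_to_refinements (x ≫ i)
      (by rw [Category.assoc, hi]; exact (x ≫= kernel.condition ε).trans comp_zero)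
    refine ⟨X', π₀, h₀, x₁, ?_⟩
    rw [← cancel_mono i, Category.assoc, Category.assoc, hqi]
    simpa using fac
  set K' := (G.mapHomologicalComplex (ComplexShape.down ℕ)).obj R.complex with hK'
  have hEx : K'.ExactAt 1 := by
    rw [HomologicalComplex.exactAt_iff_isZero_homology]
    exact IsZero.of_iso hT1 ((R.isoLeftDerivedObj G 1).symm)
  have hEx' : (K'.sc' 2 1 0).Exact :=
    (HomologicalComplex.exactAt_iff' K' 2 1 0 (by simp) (by simp)).1 hEx
  rw [Preadditive.mono_iff_cancel_zero]
  intro Z f hf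
  obtain ⟨Z1, π₁, hπ₁, y, hy⟩ := surjective_up_to_refinements_of_epi (G.map q) f
  have hy2 : y ≫ (K'.sc' 2 1 0).g = 0 := by
    have hg : (K'.sc' 2 1 0).g = G.map (R.complex.d 1 0) := rfl
    rw [hg, ← hqi, G.map_comp]
    show y ≫ G.map q ≫ G.map i = 0
    exact ((Category.assoc _ _ _).symm.trans (hy.symm =≫ G.map i)).trans
      ((Category.assoc _ _ _).trans ((π₁ ≫= hf).trans comp_zero))
  obtain ⟨Z2, π₂, hπ₂, z, hz⟩ := hEx'.exact_up_to_refinements y hy2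
  have hfS : (K'.sc' 2 1 0).f = G.map (R.complex.d 2 1) := rfl
  rw [hfS] at hz
  have hd21q : R.complex.d 2 1 ≫ q = 0 := by
    rw [← cancel_mono i, Category.assoc, hqi, zero_comp]
    exact R.complex.d_comp_d 2 1 0
  have : (π₂ ≫ π₁) ≫ f = 0 := by
    rw [Category.assoc]
    exact (π₂ ≫= hy).trans ((Category.assoc _ _ _).symm.trans ((hz =≫ G.map q).trans
      ((Category.assoc _ _ _).trans ((z ≫= ((G.map_comp _ _).symm.trans
        ((congrArg G.map hd21q).trans (G.map_zero _ _)))).trans comp_zero))))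
  exact zero_of_epi_comp (π₂ ≫ π₁) this

/-- **Key lemma.** If `η` is a mono whose cokernel `T` satisfies `G(T) = 0` and
`L₁G(T) = 0`, with `G` additive and right exact, then `G(η)` is an isomorphism. -/
lemma isIso_G_map
    (G : C ⥤ D) [G.Additive] [PreservesFiniteColimits G]
    {A B : C} (η : A ⟶ B) [Mono η]
    (hT0 : IsZero (G.obj (cokernel η)))
    (hT1 : IsZero ((G.leftDerived 1).obj (cokernel η))) :
    IsIso (G.map η) := by
  set T := cokernel η with hTdef
  set c : B ⟶ T := cokernel.π η with hcdef
  let P : C := Projective.over B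
  let p : P ⟶ B := Projective.π B
  have hEpip : Epi p := inferInstance
  let ε₀ : P ⟶ T := p ≫ c
  have hEpiε : Epi ε₀ := epi_comp p c
  let R : ProjectiveResolution T := of' P ε₀
  set ε : R.complex.X 0 ⟶ T := R.π.f 0 with hεdef
  have hε : ε = p ≫ c := of'_π_f_zero P ε₀
  set i : kernel ε ⟶ P := kernel.ι ε with hidef
  have hMi : Mono (G.map i) := mono_G_map_kernelι G R hT1
  -- the kernel of `p` as subobject of `kernel ε`
  set n : kernel p ⟶ P := kernel.ι p with hndef
  have hnε : n ≫ ε = 0 := by rw [hε, kernel.condition_assoc, zero_comp]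
  set ν : kernel p ⟶ kernel ε := kernel.lift ε n hnε with hνdef
  have hνi : ν ≫ i = n := kernel.lift_ι _ _ _
  -- the induced morphism `g : kernel ε ⟶ A`
  have hη : IsLimit (KernelFork.ofι η (CokernelCofork.condition
      (CokernelCofork.ofπ c (cokernel.condition η)))) :=
    Abelian.monoIsKernelOfCokernel _ (cokernelIsCokernel η)
  have hipc : (i ≫ p) ≫ c = 0 := by
    rw [Category.assoc, ← hε]
    exact kernel.condition ε
  obtain ⟨g, hg₀⟩ := KernelFork.IsLimit.lift' hη (i ≫ p) hipc
  have hg : g ≫ η = i ≫ p := hg₀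
  have hνg : ν ≫ g = 0 := by
    rw [← cancel_mono η, Category.assoc, hg, zero_comp, ← Category.assoc, hνi]
    exact kernel.condition p
  have hEpig : Epi g := by
    rw [epi_iff_surjective_up_to_refinements]
    intro X x
    obtain ⟨X', π₀, h₀, y, hy⟩ := surjective_up_to_refinements_of_epi p (x ≫ η)
    have hyε : y ≫ ε = 0 := by
      rw [hε, ← Category.assoc, ← hy, Category.assoc, Category.assoc, cokernel.condition,
        comp_zero, comp_zero]
    refine ⟨X', π₀, h₀, kernel.lift ε y hyε, ?_⟩
    have hli : kernel.lift ε y hyε ≫ i = y := by rw [hidef]; exact kernel.lift_ι _ _ _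
    rw [← cancel_mono η]
    simp only [Category.assoc]
    rw [hg]
    conv_rhs => rw [← Category.assoc, hli]
    exact hy
  -- the short complex `G(kernel p) ⟶ G(P) ⟶ G(B)` is exact
  have hpcok : IsColimit (CokernelCofork.ofπ p (kernel.condition p)) :=
    Abelian.epiIsCokernelOfKernel
      (KernelFork.ofι (kernel.ι p) (kernel.condition p)) (kernelIsKernel p)
  have hGpcok : IsColimit (CokernelCofork.ofπ (G.map p)
      (by rw [← G.map_comp, kernel.condition, G.map_zero])) :=
    isColimitCoforkMapOfIsColimit' G (kernel.condition p) hpcok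
  set S' : ShortComplex D := ShortComplex.mk (G.map n) (G.map p)
    (by rw [← G.map_comp, kernel.condition, G.map_zero]) with hS'def
  have hS' : S'.Exact := ShortComplex.exact_of_g_is_cokernel S' hGpcok
  -- `G.map η` is mono
  have hMono : Mono (G.map η) := by
    rw [Preadditive.mono_iff_cancel_zero]
    intro Z f hf
    obtain ⟨Z1, π₁, hπ₁, k, hk⟩ := surjective_up_to_refinements_of_epi (G.map g) f
    have h2 : (k ≫ G.map i) ≫ S'.g = 0 := by
      have : (i ≫ p) = g ≫ η := hg.symm
      show (k ≫ G.map i) ≫ G.map p = 0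
      rw [Category.assoc, ← G.map_comp, this, G.map_comp, ← Category.assoc, ← hk,
        Category.assoc, hf, comp_zero]
    obtain ⟨Z2, π₂, hπ₂, m, hm⟩ := hS'.exact_up_to_refinements (k ≫ G.map i) h2
    have hm' : π₂ ≫ k = m ≫ G.map ν := by
      rw [← cancel_mono (G.map i), Category.assoc, Category.assoc, ← G.map_comp, hνi]
      exact hm
    have : (π₂ ≫ π₁) ≫ f = 0 := by
      rw [Category.assoc, hk, ← Category.assoc, hm', Category.assoc, ← G.map_comp, hνg,
        G.map_zero, comp_zero]
    exact zero_of_epi_comp (π₂ ≫ π₁) this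
  -- `G.map η` is epi
  have hEpi : Epi (G.map η) := by
    have hz : IsZero (cokernel (G.map η)) :=
      IsZero.of_iso hT0 (PreservesCokernel.iso G η).symm
    exact Abelian.epi_of_cokernel_π_eq_zero _ (hz.eq_of_tgt _ 0)
  exact isIso_of_mono_of_epi _

end

end Stmt14Aux

open CategoryTheory CategoryTheory.Limits

universe v u

/-- If `𝒞` has enough projectives and `F` has a left adjoint `E` such that
`π' ∘ E` and `L₁(π' ∘ E)` vanish on the kernel of `π`, then `i^* := π' ∘ E ∘ ω` is left
adjoint to `i_* := π ∘ F ∘ ω'`. -/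
theorem stmt14
    -- 𝒞 is a Grothendieck abelian category
    (C : Type u) [Category.{v} C] [Abelian C] [HasColimits C] [AB5 C] [HasSeparator C]
    -- 𝒬 is a Grothendieck abelian category
    (Q : Type u) [Category.{v} Q] [Abelian Q] [HasColimits Q] [AB5 Q] [HasSeparator Q]
    -- 𝒞' is a Grothendieck abelian category
    (C' : Type u) [Category.{v} C'] [Abelian C'] [HasColimits C'] [AB5 C'] [HasSeparator C']
    -- 𝒬' is a Grothendieck abelian category
    (Q' : Type u) [Category.{v} Q'] [Abelian Q'] [HasColimits Q'] [AB5 Q'] [HasSeparator Q']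
    -- π : 𝒞 ⥤ 𝒬 is a Gabriel localization: exact with fully faithful right adjoint ω
    (π : C ⥤ Q) [π.Additive] [PreservesFiniteLimits π] [PreservesFiniteColimits π]
    (ω : Q ⥤ C) [ω.Full] [ω.Faithful] (adj : π ⊣ ω)
    -- π' : 𝒞' ⥤ 𝒬' is a Gabriel localization: exact with fully faithful right adjoint ω'
    (π' : C' ⥤ Q') [π'.Additive] [PreservesFiniteLimits π'] [PreservesFiniteColimits π']
    (ω' : Q' ⥤ C') [ω'.Full] [ω'.Faithful] (adj' : π' ⊣ ω')
    -- F : 𝒞' ⥤ 𝒞 is exact and fully faithful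
    (F : C' ⥤ C) [F.Additive] [PreservesFiniteLimits F] [PreservesFiniteColimits F]
    [F.Full] [F.Faithful]
    -- π ∘ F vanishes on the kernel of π'
    (hker : ∀ x : C', IsZero (π'.obj x) → IsZero (π.obj (F.obj x)))
    -- 𝒞 has enough projectives
    [EnoughProjectives C]
    -- F has a left adjoint E; E is additive and right exact, being a left adjoint
    (E : C ⥤ C') [E.Additive] [PreservesFiniteColimits E] (adjEF : E ⊣ F)
    -- π' ∘ E vanishes on the kernel of π
    (hkerE : ∀ s : C, IsZero (π.obj s) → IsZero (π'.obj (E.obj s)))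
    -- L₁(π' ∘ E) vanishes on the kernel of π
    (hL1 : ∀ s : C, IsZero (π.obj s) → IsZero (((E ⋙ π').leftDerived 1).obj s)) :
    Nonempty ((ω ⋙ E ⋙ π') ⊣ (ω' ⋙ F ⋙ π)) := by
  classical
  -- Step 1: for every `Y : Q'`, the unit of `adj` at `A := F(ω'(Y))` is an isomorphism.
  have main : ∀ Y : Q', IsIso (adj.unit.app (F.obj (ω'.obj Y))) := by
    intro Y
    set A := F.obj (ω'.obj Y) with hA
    set η : A ⟶ ω.obj (π.obj A) := adj.unit.app A with hηdef
    -- `π.map η` is an isomorphism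
    haveI : IsIso adj.counit := adj.counit_isIso_of_R_fully_faithful
    haveI : IsIso (adj.counit.app (π.obj A)) := inferInstance
    haveI hπη : IsIso (π.map η) := by
      have h : π.map η ≫ adj.counit.app (π.obj A) = 𝟙 (π.obj A) :=
        adj.left_triangle_components A
      have h2 : π.map η = inv (adj.counit.app (π.obj A)) := by
        rw [← cancel_mono (adj.counit.app (π.obj A)), h, IsIso.inv_hom_id]
      rw [h2]; infer_instance
    -- `η` is mono
    have hK : IsZero (π.obj (kernel η)) := by
      have h0 : IsZero (kernel (π.map η)) :=
        IsZero.of_iso (isZero_zero Q) (kernel.ofMono (π.map η))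
      exact h0.of_iso (PreservesKernel.iso π η)
    have hEK : IsZero (π'.obj (E.obj (kernel η))) := hkerE _ hK
    haveI : Subsingleton (π'.obj (E.obj (kernel η)) ⟶ Y) :=
      ⟨fun a b => hEK.eq_of_src a b⟩
    have hι : kernel.ι η = 0 := by
      have e : (π'.obj (E.obj (kernel η)) ⟶ Y) ≃ (kernel η ⟶ A) :=
        (adj'.homEquiv (E.obj (kernel η)) Y).trans (adjEF.homEquiv (kernel η) (ω'.obj Y))
      haveI : Subsingleton (kernel η ⟶ A) := e.symm.subsingleton
      exact Subsingleton.elim _ _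
    haveI hMono : Mono η := Abelian.mono_of_kernel_ι_eq_zero _ hι
    -- the cokernel of `η` is `π`-torsion
    have hT : IsZero (π.obj (cokernel η)) := by
      have h0 : IsZero (cokernel (π.map η)) :=
        IsZero.of_iso (isZero_zero Q) (cokernel.ofEpi (π.map η))
      exact h0.of_iso (PreservesCokernel.iso π η)
    -- key lemma: `(E ⋙ π').map η` is an isomorphism
    haveI : PreservesFiniteColimits (E ⋙ π') := CategoryTheory.Limits.comp_preservesFiniteColimits E π'
    haveI hGη : IsIso ((E ⋙ π').map η) :=
      Stmt14Aux.isIso_G_map (E ⋙ π') η (hkerE _ hT) (hL1 _ hT)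
    -- construct a retraction of `η`
    let φA : (E ⋙ π').obj A ⟶ Y :=
      (adj'.homEquiv (E.obj A) Y).symm ((adjEF.homEquiv A (ω'.obj Y)).symm (𝟙 A))
    let r : ω.obj (π.obj A) ⟶ A :=
      adjEF.homEquiv _ _ (adj'.homEquiv _ Y (inv ((E ⋙ π').map η) ≫ φA))
    have hr : η ≫ r = 𝟙 A := by
      have h1 : η ≫ r =
          adjEF.homEquiv A (ω'.obj Y)
            (E.map η ≫ adj'.homEquiv _ Y (inv ((E ⋙ π').map η) ≫ φA)) :=
        (adjEF.homEquiv_naturality_left η _).symm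
      rw [h1, ← adj'.homEquiv_naturality_left]
      rw [show π'.map (E.map η) = (E ⋙ π').map η from rfl, IsIso.hom_inv_id_assoc]
      simp [φA]
    -- the cokernel of `η` vanishes
    have hsplit : η ≫ (𝟙 (ω.obj (π.obj A)) - r ≫ η) = 0 := by
      rw [Preadditive.comp_sub, Category.comp_id, ← Category.assoc, hr, Category.id_comp,
        sub_self]
    let s : cokernel η ⟶ ω.obj (π.obj A) :=
      cokernel.desc η (𝟙 (ω.obj (π.obj A)) - r ≫ η) hsplit
    have hs : cokernel.π η ≫ s = 𝟙 (ω.obj (π.obj A)) - r ≫ η := cokernel.π_desc _ _ _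
    have hsc : s ≫ cokernel.π η = 𝟙 (cokernel η) := by
      rw [← cancel_epi (cokernel.π η), ← Category.assoc, hs, Preadditive.sub_comp,
        Category.id_comp, Category.assoc, cokernel.condition, comp_zero, sub_zero,
        Category.comp_id]
    have hs0 : s = 0 := by
      haveI : Subsingleton (π.obj (cokernel η) ⟶ π.obj A) :=
        ⟨fun a b => hT.eq_of_src a b⟩
      haveI : Subsingleton (cokernel η ⟶ ω.obj (π.obj A)) :=
        (adj.homEquiv (cokernel η) (π.obj A)).symm.subsingleton
      exact Subsingleton.elim _ _
    have hcoker0 : IsZero (cokernel η) := by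
      rw [IsZero.iff_id_eq_zero, ← hsc, hs0, zero_comp]
    haveI hEpi : Epi η :=
      Abelian.epi_of_cokernel_π_eq_zero _ (hcoker0.eq_of_tgt _ _)
    exact isIso_of_mono_of_epi η
  -- Step 2: assemble the adjunction.
  let ff : ω.FullyFaithful := Functor.FullyFaithful.ofFullyFaithful ω
  let u : ∀ Y : Q', F.obj (ω'.obj Y) ≅ ω.obj (π.obj (F.obj (ω'.obj Y))) := fun Y =>
    @asIso _ _ _ _ _ (main Y)
  have hu : ∀ Y : Q', (u Y).hom = adj.unit.app (F.obj (ω'.obj Y)) := fun Y => rfl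
  let he : ∀ (X : Q) (Y : Q'),
      ((ω ⋙ E ⋙ π').obj X ⟶ Y) ≃ (X ⟶ (ω' ⋙ F ⋙ π).obj Y) := fun X Y =>
    ((adj'.homEquiv (E.obj (ω.obj X)) Y).trans
      (adjEF.homEquiv (ω.obj X) (ω'.obj Y))).trans
    (((Iso.refl (ω.obj X)).homCongr (u Y)).trans ff.homEquiv.symm)
  have hsymm : ∀ (X : Q) (Y : Q') (g : X ⟶ (ω' ⋙ F ⋙ π).obj Y),
      (he X Y).symm g = (adj'.homEquiv (E.obj (ω.obj X)) Y).symm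
        ((adjEF.homEquiv (ω.obj X) (ω'.obj Y)).symm (ω.map g ≫ (u Y).inv)) := by
    intro X Y g
    simp [he, ff, Functor.FullyFaithful.homEquiv, Iso.homCongr]
  have hfwd : ∀ (X : Q) (Y : Q') (f : (ω ⋙ E ⋙ π').obj X ⟶ Y),
      he X Y f = ff.preimage
        ((adjEF.homEquiv (ω.obj X) (ω'.obj Y)) ((adj'.homEquiv (E.obj (ω.obj X)) Y) f)
          ≫ (u Y).hom) := by
    intro X Y f
    simp [he, ff, Functor.FullyFaithful.homEquiv, Iso.homCongr]
  refine ⟨Adjunction.mkOfHomEquiv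
    { homEquiv := he
      homEquiv_naturality_left_symm := ?_
      homEquiv_naturality_right := ?_ }⟩
  · intro X' X Y f g
    rw [hsymm, hsymm]
    rw [show (ω.map (f ≫ g) ≫ (u Y).inv) = ω.map f ≫ (ω.map g ≫ (u Y).inv) by
      rw [Functor.map_comp, Category.assoc]]
    rw [Adjunction.homEquiv_naturality_left_symm,
      Adjunction.homEquiv_naturality_left_symm]
    rfl
  · intro X Y Y' f g
    rw [hfwd, hfwd]
    rw [Adjunction.homEquiv_naturality_right, Adjunction.homEquiv_naturality_right]
    apply ω.map_injective
    rw [Functor.FullyFaithful.map_preimage]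
    rw [show (ω' ⋙ F ⋙ π).map g = π.map (F.map (ω'.map g)) from rfl]
    rw [Functor.map_comp, Functor.FullyFaithful.map_preimage]
    rw [hu, hu, Category.assoc, Category.assoc]
    congr 1
    have := adj.unit.naturality (F.map (ω'.map g))
    simpa using this
end
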